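/- arXiv:2410.14601 — 6 statements merged into one kernel-verified Lean document; each statement's English description precedes it below -/
import Mathlib

section
/- For any θ ∈ ℝ and any λ > e^{θ-γ}, the Laplace transform of G_θ satisfies ∫₀^∞ e^{-λt} G_θ(t) dt = 1/(log λ - θ + γ), where γ is the Euler–Mascheroni constant. -/
open MeasureTheory Set

/-- The Euler–Mascheroni constant `γ = -∫₀^∞ (log u) e^{-u} du`. -/
noncomputable def eulerGamma : ℝ := -∫ u in Set.Ioi (0:ℝ), Real.log u * Real.exp (-u)

/-- The renewal density `G_θ` of the Dickman subordinator. -/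
noncomputable def G (θ t : ℝ) : ℝ :=
  ∫ s in Set.Ioi (0:ℝ),
    Real.exp ((θ - eulerGamma) * s) * s * t ^ (s - 1) / Real.Gamma (s + 1)

theorem laplace_transform_G (θ lam : ℝ) (hlam : lam > Real.exp (θ - eulerGamma)) :
    (∫ t in Set.Ioi (0:ℝ), Real.exp (-lam * t) * G θ t)
      = 1 / (Real.log lam - θ + eulerGamma) := by
  set a := θ - eulerGamma with ha
  have hlam0 : 0 < lam := (Real.exp_pos _).trans hlam
  set c := Real.log lam - a with hc
  have hcpos : 0 < c := sub_pos.mpr ((Real.lt_log_iff_exp_lt hlam0).mpr hlam)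
  -- Γ(·+1) is a.e. measurable on Ioi 0
  have hΓcont : ContinuousOn (fun s : ℝ => Real.Gamma (s + 1)) (Ioi 0) := by
    intro s hs
    refine ContinuousAt.continuousWithinAt ?_
    refine ContinuousAt.comp (g := Real.Gamma) ?_ (by fun_prop)
    refine (Real.differentiableAt_Gamma ?_).continuousAt
    intro m h
    have : (0:ℝ) ≤ m := Nat.cast_nonneg m
    have hs' : (0:ℝ) < s := hs
    nlinarith
  have hΓaem : AEMeasurable (fun s : ℝ => Real.Gamma (s + 1)) (volume.restrict (Ioi 0)) :=
    hΓcont.aemeasurable measurableSet_Ioi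
  obtain ⟨g0, hg0m, hg0ae⟩ := hΓaem
  -- the measurable double-variable function
  set F : ℝ → ℝ → ENNReal := fun t s =>
    ENNReal.ofReal (Real.exp (-lam * t) * (Real.exp (a * s) * s * t ^ (s - 1) / g0 s)) with hF
  have hm : Measurable (Function.uncurry F) := by
    apply Measurable.ennreal_ofReal
    exact ((measurable_fst.const_mul (-lam)).exp.mul
      ((((measurable_snd.const_mul a).exp.mul measurable_snd).mul
        (measurable_fst.pow (measurable_snd.sub measurable_const))).div
        (hg0m.comp measurable_snd)))
  have hmF : Measurable fun t => ∫⁻ s in Ioi (0:ℝ), F t s := hm.lintegral_prod_right'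
  -- Step A: pointwise identification on Ioi 0
  have hinner : ∀ t ∈ Ioi (0:ℝ),
      Real.exp (-lam * t) * G θ t = (∫⁻ s in Ioi (0:ℝ), F t s).toReal := by
    intro t ht
    have ht' : (0:ℝ) < t := ht
    have h1 : G θ t = (∫⁻ s in Ioi (0:ℝ),
        ENNReal.ofReal (Real.exp (a * s) * s * t ^ (s - 1) / Real.Gamma (s + 1))).toReal := by
      rw [G, MeasureTheory.integral_eq_lintegral_of_nonneg_ae]
      · filter_upwards [self_mem_ae_restrict measurableSet_Ioi] with s hs
        have hs' : (0:ℝ) < s := hs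
        positivity
      · refine AEMeasurable.aestronglyMeasurable ?_
        refine AEMeasurable.div ?_ ⟨g0, hg0m, hg0ae⟩
        exact (((measurable_id.const_mul a).exp.mul measurable_id).mul
          (measurable_const.pow (measurable_id.sub measurable_const))).aemeasurable
    have h2 : ∫⁻ s in Ioi (0:ℝ), F t s
        = ENNReal.ofReal (Real.exp (-lam * t)) * ∫⁻ s in Ioi (0:ℝ),
            ENNReal.ofReal (Real.exp (a * s) * s * t ^ (s - 1) / Real.Gamma (s + 1)) := by
      rw [← lintegral_const_mul' _ _ ENNReal.ofReal_ne_top]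
      refine lintegral_congr_ae ?_
      filter_upwards [hg0ae] with s hs
      rw [hF]
      simp only
      rw [← ENNReal.ofReal_mul (Real.exp_nonneg _), hs]
    rw [h1, h2, ENNReal.toReal_mul, ENNReal.toReal_ofReal (Real.exp_nonneg _)]
  -- Step B
  have hB : (∫ t in Set.Ioi (0:ℝ), Real.exp (-lam * t) * G θ t)
      = (∫⁻ t in Ioi (0:ℝ), ENNReal.ofReal ((∫⁻ s in Ioi (0:ℝ), F t s).toReal)).toReal := by
    rw [setIntegral_congr_fun measurableSet_Ioi hinner]
    exact MeasureTheory.integral_eq_lintegral_of_nonneg_ae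
      (Filter.Eventually.of_forall fun t => ENNReal.toReal_nonneg)
      hmF.ennreal_toReal.aestronglyMeasurable
  -- compute the double lintegral
  have hswap : (∫⁻ t in Ioi (0:ℝ), ∫⁻ s in Ioi (0:ℝ), F t s)
      = ∫⁻ s in Ioi (0:ℝ), ∫⁻ t in Ioi (0:ℝ), F t s :=
    lintegral_lintegral_swap hm.aemeasurable
  have hinner2 : ∀ᵐ s ∂(volume.restrict (Ioi (0:ℝ))),
      (∫⁻ t in Ioi (0:ℝ), F t s) = ENNReal.ofReal (Real.exp (-(c * s))) := by
    filter_upwards [self_mem_ae_restrict measurableSet_Ioi, hg0ae] with s hs hgs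
    have hs' : (0:ℝ) < s := hs
    have hΓpos : 0 < Real.Gamma (s + 1) := Real.Gamma_pos_of_pos (by linarith)
    set K : ℝ := Real.exp (a * s) * s / Real.Gamma (s + 1) with hK
    have hKnn : 0 ≤ K := by positivity
    have hsplit : ∀ t : ℝ, F t s
        = ENNReal.ofReal K * ENNReal.ofReal (t ^ (s - 1) * Real.exp (-(lam * t))) := by
      intro t
      rw [hF]
      simp only
      rw [← hgs, ← ENNReal.ofReal_mul hKnn]
      congr 1
      rw [hK]
      ring_nf
    have hint : IntegrableOn (fun t : ℝ => t ^ (s - 1) * Real.exp (-(lam * t))) (Ioi 0) := by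
      have h := integrableOn_rpow_mul_exp_neg_mul_rpow (p := 1) (s := s - 1) (b := lam)
        (by linarith) zero_lt_one hlam0
      simpa [Real.rpow_one, neg_mul] using h
    have hnn : 0 ≤ᵐ[volume.restrict (Ioi (0:ℝ))]
        fun t : ℝ => t ^ (s - 1) * Real.exp (-(lam * t)) := by
      filter_upwards [self_mem_ae_restrict measurableSet_Ioi] with t ht
      have : (0:ℝ) < t := ht
      positivity
    calc ∫⁻ t in Ioi (0:ℝ), F t s
        = ENNReal.ofReal K * ∫⁻ t in Ioi (0:ℝ),
            ENNReal.ofReal (t ^ (s - 1) * Real.exp (-(lam * t))) := by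
          simp_rw [hsplit]
          exact lintegral_const_mul' _ _ ENNReal.ofReal_ne_top
      _ = ENNReal.ofReal K * ENNReal.ofReal ((1 / lam) ^ s * Real.Gamma s) := by
          rw [← ofReal_integral_eq_lintegral_ofReal hint hnn,
            Real.integral_rpow_mul_exp_neg_mul_Ioi hs' hlam0]
      _ = ENNReal.ofReal (Real.exp (-(c * s))) := by
          rw [← ENNReal.ofReal_mul hKnn]
          congr 1
          have hΓs : Real.Gamma (s + 1) = s * Real.Gamma s := Real.Gamma_add_one hs'.ne'
          have hΓspos : 0 < Real.Gamma s := Real.Gamma_pos_of_pos hs'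
          have hrw : ((1:ℝ) / lam) ^ s = Real.exp (-(Real.log lam) * s) := by
            rw [Real.rpow_def_of_pos (by positivity), one_div, Real.log_inv]
          rw [hK, hΓs, hrw, hc, ha]
          have he : Real.exp (-((Real.log lam - (θ - eulerGamma)) * s))
              = Real.exp ((θ - eulerGamma) * s) * Real.exp (-Real.log lam * s) := by
            rw [← Real.exp_add]; congr 1; ring
          field_simp [he, hs'.ne', hΓspos.ne']
          rw [← Real.exp_add]; congr 1; ring
      -- done
  have hJ : (∫⁻ t in Ioi (0:ℝ), ∫⁻ s in Ioi (0:ℝ), F t s) = ENNReal.ofReal (1 / c) := by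
    rw [hswap, lintegral_congr_ae hinner2]
    have hint : IntegrableOn (fun s : ℝ => Real.exp (-(c * s))) (Ioi 0) := by
      simpa [neg_mul] using exp_neg_integrableOn_Ioi 0 hcpos
    have hnn : 0 ≤ᵐ[volume.restrict (Ioi (0:ℝ))] fun s : ℝ => Real.exp (-(c * s)) :=
      Filter.Eventually.of_forall fun s => (Real.exp_pos _).le
    rw [← ofReal_integral_eq_lintegral_ofReal hint hnn]
    congr 1
    have h := Real.integral_rpow_mul_exp_neg_mul_Ioi zero_lt_one hcpos
    simpa [Real.rpow_one, Real.Gamma_one] using h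
  -- finish
  have hfin : ∀ᵐ t ∂(volume.restrict (Ioi (0:ℝ))), (∫⁻ s in Ioi (0:ℝ), F t s) < ⊤ :=
    ae_lt_top hmF (by rw [hJ]; exact ENNReal.ofReal_ne_top)
  have hcongr : (∫⁻ t in Ioi (0:ℝ), ENNReal.ofReal ((∫⁻ s in Ioi (0:ℝ), F t s).toReal))
      = ∫⁻ t in Ioi (0:ℝ), ∫⁻ s in Ioi (0:ℝ), F t s := by
    refine lintegral_congr_ae ?_
    filter_upwards [hfin] with t htop
    exact ENNReal.ofReal_toReal htop.ne
  rw [hB, hcongr, hJ, ENNReal.toReal_ofReal (by positivity)]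
  rw [hc, ha]
  ring_nf
end

section
/- Define coefficients c^k_i for integers k ≥ 0 and i ≥ 0 by c^0_0 = 1, c^k_i = 0 for i > k, and the recursion c^{k+1}_i = Σ_{j=0}^{i} c^k_j for i ≤ k+1. Then for all 0 ≤ i ≤ m, c^m_i = (m - i + 1)/i! · (m+i)!/(m+1)!. -/
/-- The combinatorial coefficients `c^k_i`: `c^0_0 = 1`, `c^k_i = 0` for `i > k`,
and `c^{k+1}_i = ∑_{j=0}^i c^k_j` for `i ≤ k+1`. -/
def c : ℕ → ℕ → ℕ
  | 0, 0 => 1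
  | 0, _ + 1 => 0
  | k + 1, i => if i ≤ k + 1 then ∑ j ∈ Finset.range (i + 1), c k j else 0

lemma c_zero : ∀ m, c m 0 = 1
  | 0 => rfl
  | m + 1 => by simp [c, Finset.sum_range_one, c_zero m]

lemma c_of_gt : ∀ m i, m < i → c m i = 0
  | 0, _ + 1, _ => rfl
  | _ + 1, i, h => by simp [c, Nat.not_le.mpr h]

lemma c_succ (m i : ℕ) (h : i + 1 ≤ m + 1) :
    c (m + 1) (i + 1) = c (m + 1) i + c m (i + 1) := by
  have h' : i ≤ m + 1 := by omega
  simp [c, h, h', Finset.sum_range_succ]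

theorem c_exact_formula (m i : ℕ) (h : i ≤ m) :
    (c m i : ℝ) = (((m - i + 1 : ℕ) : ℝ) / (Nat.factorial i : ℝ)) *
      ((Nat.factorial (m + i) : ℝ) / (Nat.factorial (m + 1) : ℝ)) := by
  induction m generalizing i with
  | zero =>
    interval_cases i
    simp [c]
  | succ m ih =>
    suffices H : ∀ i, i ≤ m + 1 → (c (m + 1) i : ℝ) =
        (((m + 1 - i + 1 : ℕ) : ℝ) / (Nat.factorial i : ℝ)) *
        ((Nat.factorial (m + 1 + i) : ℝ) / (Nat.factorial (m + 1 + 1) : ℝ)) from H i h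
    clear h
    intro i
    induction i with
    | zero =>
      intro _
      rw [c_zero]
      have e : Nat.factorial (m + 1 + 1) = (m + 2) * Nat.factorial (m + 1) := rfl
      rw [e]
      have hf : (Nat.factorial (m + 1) : ℝ) ≠ 0 := by positivity
      have hm : ((m : ℝ) + 2) ≠ 0 := by positivity
      simp only [Nat.add_zero, Nat.sub_zero, Nat.factorial_zero]
      push_cast
      field_simp
      ring
    | succ i ihi =>
      intro hi
      obtain ⟨d, rfl⟩ : ∃ d, m = i + d := ⟨m - i, by omega⟩
      rw [c_succ _ _ hi, Nat.cast_add, ihi (by omega)]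
      have h1 : (Nat.factorial i : ℝ) ≠ 0 := by positivity
      have h4 : ((i : ℝ) + 1) ≠ 0 := by positivity
      rcases d with _ | d
      · -- i + 1 = m + 1 case : c (i) (i+1) = 0
        rw [c_of_gt (i + 0) (i + 1) (by omega)]
        have e1 : i + 0 + 1 - (i + 1) + 1 = 1 := by omega
        have e2 : i + 0 + 1 - i + 1 = 2 := by omega
        have e4 : i + 0 + 1 + (i + 1) = (i + 0 + 1 + i) + 1 := by omega
        rw [e1, e2, e4, Nat.factorial_succ (i + 0 + 1 + i), Nat.factorial_succ i]
        have h3 : (Nat.factorial (i + 0 + 1 + i) : ℝ) ≠ 0 := by positivity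
        have h5 : (Nat.factorial (i + 0 + 1 + 1) : ℝ) ≠ 0 := by positivity
        push_cast
        field_simp
        ring
      · rw [ih (i + 1) (by omega)]
        have e1 : i + (d + 1) + 1 - (i + 1) + 1 = d + 2 := by omega
        have e2 : i + (d + 1) + 1 - i + 1 = d + 3 := by omega
        have e3 : i + (d + 1) - (i + 1) + 1 = d + 1 := by omega
        have e4 : i + (d + 1) + 1 + (i + 1) = (i + (d + 1) + 1 + i) + 1 := by omega
        have e5 : i + (d + 1) + (i + 1) = i + (d + 1) + 1 + i := by omega
        rw [e1, e2, e3, e4, e5, Nat.factorial_succ (i + (d + 1) + 1 + i),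
          show i + (d + 1) + 1 + 1 = (i + (d + 1) + 1) + 1 from rfl,
          Nat.factorial_succ (i + (d + 1) + 1), Nat.factorial_succ i]
        have h2 : (Nat.factorial (i + (d + 1) + 1) : ℝ) ≠ 0 := by positivity
        have h3 : (Nat.factorial (i + (d + 1) + 1 + i) : ℝ) ≠ 0 := by positivity
        have h5 : ((i : ℝ) + (d + 1) + 1 + 1) ≠ 0 := by positivity
        push_cast
        field_simp
        ring
end

section
/- With c^m_i defined by c^0_0 = 1, c^k_i = 0 for i > k, and c^{k+1}_i = Σ_{j=0}^{i} c^k_j for i ≤ k+1, one has the bound c^m_i ≤ 4^m for all 0 ≤ i ≤ m. -/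
/-- Hockey stick identity. -/
lemma sum_choose_diag (k i : ℕ) :
    ∑ j ∈ Finset.range (i + 1), (k + j).choose j = (k + i + 1).choose i := by
  induction i with
  | zero => simp
  | succ n ih =>
      rw [Finset.sum_range_succ, ih]
      have : k + (n + 1) + 1 = (k + n + 1) + 1 := by ring
      rw [this, Nat.choose_succ_succ]
      have : k + (n + 1) = k + n + 1 := by ring
      rw [this]

lemma c_le_choose (k i : ℕ) : c k i ≤ (k + i).choose i := by
  induction k generalizing i with
  | zero =>
      cases i with
      | zero => simp [c]
      | succ n => simp [c]
  | succ n ih =>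
      rw [c]
      split
      · calc ∑ j ∈ Finset.range (i + 1), c n j
            ≤ ∑ j ∈ Finset.range (i + 1), (n + j).choose j :=
              Finset.sum_le_sum fun j _ => ih j
          _ = (n + i + 1).choose i := sum_choose_diag n i
          _ = (n + 1 + i).choose i := by ring_nf
      · exact Nat.zero_le _

theorem c_le_four_pow (m i : ℕ) (h : i ≤ m) : c m i ≤ 4 ^ m := by
  calc c m i ≤ (m + i).choose i := c_le_choose m i
    _ ≤ (2 * m).choose i := Nat.choose_le_choose i (by omega)
    _ ≤ ∑ j ∈ Finset.range (2 * m + 1), (2 * m).choose j :=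
        Finset.single_le_sum (fun j _ => Nat.zero_le _) (by simp; omega)
    _ = 2 ^ (2 * m) := Nat.sum_range_choose _
    _ = 4 ^ m := by rw [pow_mul]; norm_num
end

section
/- Let f: (0,2] → [0,∞) be non-increasing and differentiable with -u f'(u) ≤ K for all u ∈ (0,2] and some K > 0. Then for every integer j ≥ 1 and w ∈ (0,1), ∫_0^{2w} f(u)^j du ≤ 2w Σ_{i=0}^{j} (j!/(j-i)!) K^i f(2w)^{j-i}. -/
open MeasureTheory Set intervalIntegral
open Filter

theorem iterated_ibp_bound (f f' : ℝ → ℝ)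
    (hf_nonneg : ∀ x ∈ Set.Ioc (0:ℝ) 2, 0 ≤ f x)
    (hf_mono : AntitoneOn f (Set.Ioc (0:ℝ) 2))
    (hf_deriv : ∀ x ∈ Set.Ioc (0:ℝ) 2, HasDerivAt f (f' x) x)
    (K : ℝ) (hK : 0 < K)
    (hbound : ∀ x ∈ Set.Ioc (0:ℝ) 2, -x * f' x ≤ K)
    (j : ℕ) (hj : 1 ≤ j) (w : ℝ) (hw : w ∈ Set.Ioo (0:ℝ) 1) :
    (∫ u in (0:ℝ)..(2*w), f u ^ j) ≤
      2 * w * ∑ i ∈ Finset.range (j + 1),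
        ((Nat.factorial j : ℝ) / (Nat.factorial (j - i) : ℝ)) * K ^ i * f (2*w) ^ (j - i) := by
  obtain ⟨hw0, hw1⟩ := hw
  set b : ℝ := 2 * w with hbdef
  have hb0 : 0 < b := by positivity
  have hb2 : b < 2 := by simp only [hbdef]; linarith
  have hbmem : b ∈ Set.Ioc (0:ℝ) 2 := ⟨hb0, hb2.le⟩
  have hfb : 0 ≤ f b := hf_nonneg b hbmem
  -- the RHS sum is nonnegative
  have hsum_nonneg : ∀ m : ℕ, 0 ≤ ∑ i ∈ Finset.range (m + 1),
      ((Nat.factorial m : ℝ) / (Nat.factorial (m - i) : ℝ)) * K ^ i * f b ^ (m - i) := by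
    intro m
    apply Finset.sum_nonneg
    intro i _
    have h1 : (0:ℝ) ≤ (Nat.factorial m : ℝ) / (Nat.factorial (m - i) : ℝ) := by positivity
    positivity
  -- derivative is nonpositive on the interior
  have hf'_nonpos : ∀ x ∈ Set.Ioo (0:ℝ) 2, f' x ≤ 0 := by
    intro x hx
    have hd := hf_deriv x ⟨hx.1, hx.2.le⟩
    have hslope := hasDerivAt_iff_tendsto_slope.mp hd
    have hright : Tendsto (slope f x) (nhdsWithin x (Set.Ioi x)) (nhds (f' x)) :=
      hslope.mono_left (nhdsWithin_mono x fun y hy => ne_of_gt hy)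
    refine le_of_tendsto hright ?_
    filter_upwards [Ioo_mem_nhdsGT_of_mem ⟨le_refl x, hx.2⟩] with y hy
    have hyx : x < y := hy.1
    have hfle : f y ≤ f x := hf_mono ⟨hx.1, hx.2.le⟩ ⟨hx.1.trans hyx, hy.2.le⟩ hyx.le
    rw [slope_def_field]
    apply div_nonpos_of_nonpos_of_nonneg <;> linarith
  -- key step: the bound on [a, b] for every a ∈ (0, b), by induction on m
  have key : ∀ a ∈ Set.Ioo (0:ℝ) b, ∀ m : ℕ,
      (∫ u in a..b, f u ^ m) ≤ b * ∑ i ∈ Finset.range (m + 1),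
        ((Nat.factorial m : ℝ) / (Nat.factorial (m - i) : ℝ)) * K ^ i * f b ^ (m - i) := by
    intro a ha m
    obtain ⟨ha0, hab⟩ := ha
    have hsub : Set.Icc a b ⊆ Set.Ioc (0:ℝ) 2 := fun x hx =>
      ⟨lt_of_lt_of_le ha0 hx.1, hx.2.trans hb2.le⟩
    have hsub' : Set.uIcc a b ⊆ Set.Ioc (0:ℝ) 2 := by
      rw [Set.uIcc_of_le hab.le]; exact hsub
    have hcont : ContinuousOn f (Set.Icc a b) := fun x hx =>
      ((hf_deriv x (hsub hx)).continuousAt).continuousWithinAt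
    have hfle : ∀ x ∈ Set.Icc a b, f x ≤ f a := fun x hx =>
      hf_mono (hsub ⟨le_refl a, hab.le⟩) (hsub hx) hx.1
    have hfnn : ∀ x ∈ Set.Icc a b, 0 ≤ f x := fun x hx => hf_nonneg x (hsub hx)
    have hfa0 : 0 ≤ f a := hfnn a ⟨le_refl a, hab.le⟩
    -- f' bounds on [a,b]
    have hf'bd : ∀ x ∈ Set.Icc a b, -f' x ≤ K / a ∧ f' x ≤ 0 := by
      intro x hx
      have hx2 : x ∈ Set.Ioc (0:ℝ) 2 := hsub hx
      have h1 : -x * f' x ≤ K := hbound x hx2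
      have h2 : f' x ≤ 0 := hf'_nonpos x ⟨hx2.1, lt_of_le_of_lt hx.2 hb2⟩
      refine ⟨?_, h2⟩
      rw [le_div_iff₀ ha0]
      nlinarith [hx.1]
    -- integrability of f^n on [a,b]
    have hint_pow : ∀ n : ℕ, IntervalIntegrable (fun u => f u ^ n) volume a b := by
      intro n
      apply ContinuousOn.intervalIntegrable
      rw [Set.uIcc_of_le hab.le]
      exact hcont.pow n
    have hmeas_f' : AEStronglyMeasurable f' (volume.restrict (Set.Ioc a b)) := by
      have : ∀ x ∈ Set.Ioc a b, deriv f x = f' x := fun x hx =>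
        (hf_deriv x (hsub ⟨hx.1.le, hx.2⟩)).deriv
      exact ((measurable_deriv f).aestronglyMeasurable.restrict).congr
        ((ae_restrict_iff' measurableSet_Ioc).mpr (Filter.Eventually.of_forall this))
    have hmeas_f : AEStronglyMeasurable f (volume.restrict (Set.Ioc a b)) :=
      (hcont.mono Set.Ioc_subset_Icc_self).aestronglyMeasurable measurableSet_Ioc
    have hint_deriv : ∀ n : ℕ, ∀ c : ℝ → ℝ, ∀ C : ℝ, 0 ≤ C → ContinuousOn c (Set.Icc a b) →
        (∀ x ∈ Set.Icc a b, |c x| ≤ C) →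
        IntervalIntegrable (fun x => c x * ((n:ℝ) * f x ^ (n - 1) * f' x)) volume a b := by
      intro n c C hC hc hcb
      rw [intervalIntegrable_iff_integrableOn_Ioc_of_le hab.le]
      have hmeas : AEStronglyMeasurable (fun x => c x * ((n:ℝ) * f x ^ (n - 1) * f' x))
          (volume.restrict (Set.Ioc a b)) := by
        exact ((hc.mono Set.Ioc_subset_Icc_self).aestronglyMeasurable measurableSet_Ioc).mul
          ((aestronglyMeasurable_const.mul (hmeas_f.pow _)).mul hmeas_f')
      apply Integrable.mono' (integrable_const (C * ((n:ℝ) * f a ^ (n - 1) * (K / a)))) hmeas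
      rw [ae_restrict_iff' measurableSet_Ioc]
      refine Filter.Eventually.of_forall fun x hx => ?_
      have hx' : x ∈ Set.Icc a b := Set.Ioc_subset_Icc_self hx
      have h1 := (hf'bd x hx').1
      have h2 := (hf'bd x hx').2
      have h3 := hfnn x hx'
      have h4 := hfle x hx'
      have h5 := hcb x hx'
      have hKa : 0 ≤ K / a := by positivity
      have hpow : f x ^ (n - 1) ≤ f a ^ (n - 1) := pow_le_pow_left₀ h3 h4 _
      have hpow0 : (0:ℝ) ≤ f x ^ (n - 1) := pow_nonneg h3 _
      simp only [Real.norm_eq_abs]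
      rw [abs_mul, abs_mul, abs_mul]
      have e1 : |(n:ℝ)| = (n:ℝ) := abs_of_nonneg (Nat.cast_nonneg n)
      have e2 : |f x ^ (n - 1)| = f x ^ (n - 1) := abs_of_nonneg hpow0
      have e3 : |f' x| = -f' x := abs_of_nonpos h2
      rw [e1, e2, e3]
      have hbnd : (n:ℝ) * f x ^ (n - 1) * -f' x ≤ (n:ℝ) * f a ^ (n - 1) * (K / a) := by
        apply mul_le_mul
        · exact mul_le_mul_of_nonneg_left hpow (Nat.cast_nonneg n)
        · linarith
        · linarith
        · positivity
      have hb' : (0:ℝ) ≤ (n:ℝ) * f x ^ (n - 1) * -f' x := by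
        apply mul_nonneg (by positivity); linarith
      exact mul_le_mul h5 hbnd hb' hC
    -- the one-step IBP inequality
    have step : ∀ n : ℕ, 1 ≤ n → (∫ u in a..b, f u ^ n) ≤
        b * f b ^ n + (n:ℝ) * K * ∫ u in a..b, f u ^ (n - 1) := by
      intro n hn
      have hd : ∀ x ∈ Set.uIcc a b, HasDerivAt (fun y => f y ^ n)
          ((n:ℝ) * f x ^ (n - 1) * f' x) x := fun x hx =>
        (hf_deriv x (hsub' hx)).pow n
      have hid : ∀ x ∈ Set.uIcc a b, HasDerivAt (fun y : ℝ => y) (1:ℝ) x := fun x _ =>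
        hasDerivAt_id x
      have hint1 : IntervalIntegrable (fun _ : ℝ => (1:ℝ)) volume a b :=
        intervalIntegrable_const
      have hint2 : IntervalIntegrable (fun x => (n:ℝ) * f x ^ (n - 1) * f' x) volume a b := by
        have := hint_deriv n (fun _ => 1) 1 zero_le_one continuousOn_const
          (fun x _ => by rw [abs_one])
        simpa using this
      have ibp := intervalIntegral.integral_mul_deriv_eq_deriv_mul hid hd hint1 hint2
      have hx_int : IntervalIntegrable (fun x => x * ((n:ℝ) * f x ^ (n - 1) * f' x)) volume a b :=
        hint_deriv n (fun x => x) b hb0.le continuousOn_id (fun x hx => by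
          rw [abs_of_nonneg (le_trans ha0.le hx.1)]; exact hx.2)
      have heq : (∫ u in a..b, f u ^ n) =
          b * f b ^ n - a * f a ^ n - ∫ x in a..b, x * ((n:ℝ) * f x ^ (n - 1) * f' x) := by
        have : (∫ x in a..b, (1:ℝ) * f x ^ n) = (∫ x in a..b, f x ^ n) := by
          simp
        rw [← this]
        linarith [ibp]
      rw [heq]
      have hmono : (∫ x in a..b, -(x * ((n:ℝ) * f x ^ (n - 1) * f' x))) ≤
          ∫ x in a..b, (n:ℝ) * K * f x ^ (n - 1) := by
        apply intervalIntegral.integral_mono_on hab.le hx_int.neg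
          ((hint_pow (n-1)).const_mul _)
        · intro x hx
          simp only [Pi.neg_apply]
          have hx2 : x ∈ Set.Ioc (0:ℝ) 2 := hsub hx
          have hb1 : -x * f' x ≤ K := hbound x hx2
          have h3 : 0 ≤ f x ^ (n - 1) := pow_nonneg (hfnn x hx) _
          have e : -(x * ((n:ℝ) * f x ^ (n - 1) * f' x)) =
              (n:ℝ) * (-x * f' x) * f x ^ (n-1) := by ring
          rw [e]
          apply mul_le_mul_of_nonneg_right _ h3
          exact mul_le_mul_of_nonneg_left hb1 (Nat.cast_nonneg n)
      rw [intervalIntegral.integral_neg, intervalIntegral.integral_const_mul] at hmono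
      nlinarith [mul_nonneg ha0.le (pow_nonneg hfa0 n)]
    -- induction
    induction m with
    | zero =>
      simp only [pow_zero, Finset.range_one, Finset.sum_singleton, Nat.sub_zero,
        Nat.factorial_zero]
      rw [intervalIntegral.integral_const]
      simp
      linarith
    | succ n ih =>
      have h1 := step (n + 1) (Nat.le_add_left 1 n)
      simp only [Nat.add_sub_cancel] at h1
      have h2 : (∫ u in a..b, f u ^ n) ≤ b * ∑ i ∈ Finset.range (n + 1),
          ((Nat.factorial n : ℝ) / (Nat.factorial (n - i) : ℝ)) * K ^ i * f b ^ (n - i) := ih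
      have h3 : ((n:ℝ) + 1) * K * (∫ u in a..b, f u ^ n) ≤
          ((n:ℝ) + 1) * K * (b * ∑ i ∈ Finset.range (n + 1),
          ((Nat.factorial n : ℝ) / (Nat.factorial (n - i) : ℝ)) * K ^ i * f b ^ (n - i)) := by
        apply mul_le_mul_of_nonneg_left h2 (by positivity)
      have hcast : ((n + 1 : ℕ) : ℝ) = (n:ℝ) + 1 := by push_cast; ring
      rw [hcast] at h1
      have halg : b * f b ^ (n + 1) + ((n:ℝ) + 1) * K * (b * ∑ i ∈ Finset.range (n + 1),
          ((Nat.factorial n : ℝ) / (Nat.factorial (n - i) : ℝ)) * K ^ i * f b ^ (n - i)) =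
          b * ∑ i ∈ Finset.range (n + 1 + 1),
          ((Nat.factorial (n+1) : ℝ) / (Nat.factorial (n + 1 - i) : ℝ)) * K ^ i *
            f b ^ (n + 1 - i) := by
        rw [Finset.sum_range_succ' (fun i => ((Nat.factorial (n+1) : ℝ) /
            (Nat.factorial (n + 1 - i) : ℝ)) * K ^ i * f b ^ (n + 1 - i)) (n+1)]
        have e0 : ((Nat.factorial (n+1) : ℝ) / (Nat.factorial (n + 1 - 0) : ℝ)) * K ^ 0 *
            f b ^ (n + 1 - 0) = f b ^ (n+1) := by
          simp only [Nat.sub_zero, pow_zero, mul_one]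
          rw [div_self (by exact_mod_cast (Nat.factorial_pos (n+1)).ne'), one_mul]
        have e1 : ∀ i ∈ Finset.range (n+1),
            ((Nat.factorial (n+1) : ℝ) / (Nat.factorial (n + 1 - (i+1)) : ℝ)) * K ^ (i+1) *
            f b ^ (n + 1 - (i+1)) = ((n:ℝ) + 1) * K *
            (((Nat.factorial n : ℝ) / (Nat.factorial (n - i) : ℝ)) * K ^ i * f b ^ (n - i)) := by
          intro i hi
          have h : n + 1 - (i + 1) = n - i := by omega
          rw [h, Nat.factorial_succ]
          push_cast
          ring
        rw [Finset.sum_congr rfl e1, e0, ← Finset.mul_sum]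
        ring
      linarith [h1, h3]
  -- now take the limit a → 0⁺
  by_cases hI : IntervalIntegrable (fun u => f u ^ j) volume 0 b
  · have hIoc : IntegrableOn (fun u => f u ^ j) (Set.Ioc 0 b) volume :=
      (intervalIntegrable_iff_integrableOn_Ioc_of_le hb0.le).mp hI
    set φ : ℕ → Set ℝ := fun n => Set.Ioc (b / ((n:ℝ) + 2)) b with hφ
    have hmono : Monotone φ := by
      intro n m hnm
      apply Set.Ioc_subset_Ioc_left
      apply div_le_div_of_nonneg_left hb0.le (by positivity)
      have : ((n:ℝ)) ≤ (m:ℝ) := Nat.cast_le.mpr hnm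
      linarith
    have hunion : ⋃ n, φ n = Set.Ioc (0:ℝ) b := by
      ext x
      simp only [hφ, Set.mem_iUnion, Set.mem_Ioc]
      constructor
      · rintro ⟨n, h1, h2⟩
        exact ⟨lt_trans (by positivity) h1, h2⟩
      · rintro ⟨h1, h2⟩
        obtain ⟨n, hn⟩ := exists_nat_gt (b / x)
        refine ⟨n, ?_, h2⟩
        rw [div_lt_iff₀ (by positivity)]
        have h4 : b / x < (n:ℝ) + 2 := by linarith
        have h5 : b < ((n:ℝ) + 2) * x := (div_lt_iff₀ h1).mp h4
        linarith [h5, mul_comm ((n:ℝ) + 2) x]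
    have htend := MeasureTheory.tendsto_setIntegral_of_monotone
      (fun n : ℕ => measurableSet_Ioc) hmono (hunion ▸ hIoc)
    rw [hunion] at htend
    have heq : (∫ u in (0:ℝ)..b, f u ^ j) = ∫ u in Set.Ioc (0:ℝ) b, f u ^ j :=
      intervalIntegral.integral_of_le hb0.le
    rw [heq]
    refine le_of_tendsto htend (Filter.Eventually.of_forall fun n => ?_)
    have han : b / ((n:ℝ)+2) ∈ Set.Ioo 0 b := by
      constructor
      · positivity
      · rw [div_lt_iff₀ (by positivity)]
        nlinarith [hb0, Nat.cast_nonneg (α := ℝ) n]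
    have hk := key _ han j
    rw [intervalIntegral.integral_of_le han.2.le] at hk
    exact hk
  · rw [intervalIntegral.integral_undef hI]
    exact mul_nonneg hb0.le (hsum_nonneg j)
end

section
/- Let F be non-negative and non-increasing on (0,2] with F(w) ≤ 2/(w log λ) for all w > 0, where λ > 1, and set f(w) := ∫_w^2 F(v) dv. Then for every integer j ≥ 0 and w ∈ (0,1): ∫_0^2 F(u+w) f(u)^j du ≤ Σ_{ℓ=0}^{j+1} (j!/(j+1-ℓ)!) (4/log λ)^ℓ f(2w)^{j+1-ℓ}. -/
set_option maxHeartbeats 1000000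

open MeasureTheory Set intervalIntegral Finset


-- telescoping identity
lemma tele_sum (m : ℕ) (x : ℝ) :
    ∑ i ∈ Finset.range (m+1), (m.factorial / i.factorial : ℝ) * (x ^ i - i * x ^ (i-1)) = x ^ m := by
  have h1 : ∑ i ∈ Finset.range (m+1), (m.factorial / i.factorial : ℝ) * (x ^ i - i * x ^ (i-1))
      = (∑ i ∈ Finset.range (m+1), (m.factorial / i.factorial : ℝ) * x ^ i)
        - ∑ i ∈ Finset.range (m+1), (m.factorial / i.factorial : ℝ) * (i * x ^ (i-1)) := by
    rw [← Finset.sum_sub_distrib]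
    congr 1 with i
    ring
  rw [h1, Finset.sum_range_succ (fun i => (m.factorial / i.factorial : ℝ) * x ^ i),
    Finset.sum_range_succ' (fun i => (m.factorial / i.factorial : ℝ) * (i * x ^ (i-1)))]
  have h2 : ∀ i : ℕ, (m.factorial / (i+1).factorial : ℝ) * (((i+1 : ℕ) : ℝ) * x ^ (i+1-1))
      = (m.factorial / i.factorial : ℝ) * x ^ i := by
    intro i
    simp only [Nat.add_sub_cancel]
    have : ((i+1).factorial : ℝ) = (i+1) * i.factorial := by
      rw [Nat.factorial_succ]; push_cast; ring
    rw [this]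
    have hi : (i:ℝ) + 1 ≠ 0 := by positivity
    have hfi : (i.factorial : ℝ) ≠ 0 := by positivity
    field_simp
    push_cast
    ring
  simp only [h2]
  have hmm : (m.factorial:ℝ)/(m.factorial:ℝ) = 1 := div_self (by positivity)
  simp [hmm]

-- key integral bound
lemma log_pow_integral_bound (b ε : ℝ) (hε : 0 < ε) (hεb : ε ≤ b) (m : ℕ) :
    (∫ u in ε..b, (Real.log b - Real.log u) ^ m) ≤ b * m.factorial := by
  set H : ℝ → ℝ := fun u => ∑ i ∈ Finset.range (m+1),
    (m.factorial / i.factorial : ℝ) * (u * (Real.log b - Real.log u) ^ i) with hH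
  have hb : 0 < b := lt_of_lt_of_le hε hεb
  have hderiv : ∀ u ∈ Set.uIcc ε b, HasDerivAt H ((Real.log b - Real.log u) ^ m) u := by
    intro u hu
    rw [Set.uIcc_of_le hεb] at hu
    have hu0 : 0 < u := lt_of_lt_of_le hε hu.1
    have key : ∀ i : ℕ, HasDerivAt (fun v => v * (Real.log b - Real.log v) ^ i)
        ((Real.log b - Real.log u) ^ i - i * (Real.log b - Real.log u) ^ (i-1)) u := by
      intro i
      have hlog : HasDerivAt (fun v : ℝ => Real.log b - Real.log v) (-(1/u)) u := by
        simpa using ((Real.hasDerivAt_log hu0.ne').const_sub (Real.log b))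
      have hpow : HasDerivAt (fun v : ℝ => (Real.log b - Real.log v) ^ i)
          ((i:ℝ) * (Real.log b - Real.log u) ^ (i-1) * (-(1/u))) u := hlog.pow i
      have := (hasDerivAt_id u).mul hpow
      refine this.congr_deriv ?_
      have hu0' := hu0.ne'
      simp only [id]
      field_simp
      ring
    have hsum : HasDerivAt H (∑ i ∈ Finset.range (m+1), (m.factorial / i.factorial : ℝ) *
        ((Real.log b - Real.log u) ^ i - i * (Real.log b - Real.log u) ^ (i-1))) u := by
      apply HasDerivAt.fun_sum
      intro i _
      exact (key i).const_mul _
    rwa [tele_sum m] at hsum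
  have hcont : ContinuousOn (fun u => (Real.log b - Real.log u) ^ m) (Set.uIcc ε b) := by
    apply ContinuousOn.pow
    apply ContinuousOn.sub continuousOn_const
    apply Real.continuousOn_log.mono
    intro x hx
    rw [Set.uIcc_of_le hεb] at hx
    exact Set.mem_compl_singleton_iff.mpr (ne_of_gt (lt_of_lt_of_le hε hx.1))
  have hint : IntervalIntegrable (fun u => (Real.log b - Real.log u) ^ m) volume ε b :=
    hcont.intervalIntegrable
  rw [intervalIntegral.integral_eq_sub_of_hasDerivAt hderiv hint]
  have hHb : H b = b * m.factorial := by
    rw [hH]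
    simp only [sub_self]
    rw [Finset.sum_eq_single 0]
    · simp [mul_comm]
    · intro i _ hi
      simp [zero_pow hi]
    · simp
  have hHε : 0 ≤ H ε := by
    apply Finset.sum_nonneg
    intro i _
    have : 0 ≤ Real.log b - Real.log ε := by
      simp only [sub_nonneg]
      exact Real.log_le_log hε hεb
    positivity
  rw [hHb]
  linarith



section Helpers

variable {F f : ℝ → ℝ}

lemma F_int (hF_mono : AntitoneOn F (Set.Ioc (0:ℝ) 2)) {a b : ℝ}
    (ha : 0 < a) (hab : a ≤ b) (hb : b ≤ 2) : IntervalIntegrable F volume a b := by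
  apply AntitoneOn.intervalIntegrable
  apply hF_mono.mono
  rw [Set.uIcc_of_le hab]
  intro x hx
  exact ⟨lt_of_lt_of_le ha hx.1, le_trans hx.2 hb⟩

lemma f_sub (hF_mono : AntitoneOn F (Set.Ioc (0:ℝ) 2))
    (hf : ∀ w : ℝ, f w = ∫ v in w..2, F v) {a b : ℝ}
    (ha : 0 < a) (hab : a ≤ b) (hb : b ≤ 2) : f a - f b = ∫ u in a..b, F u := by
  rw [hf, hf]
  have h := intervalIntegral.integral_add_adjacent_intervals
    (F_int hF_mono ha hab hb) (F_int hF_mono (lt_of_lt_of_le ha hab) hb le_rfl)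
  linarith

lemma f_nonneg (hF_nonneg : ∀ x : ℝ, 0 < x → 0 ≤ F x)
    (hf : ∀ w : ℝ, f w = ∫ v in w..2, F v) {a : ℝ} (ha : 0 < a) (ha2 : a ≤ 2) : 0 ≤ f a := by
  rw [hf]
  apply intervalIntegral.integral_nonneg ha2
  intro x hx
  exact hF_nonneg x (lt_of_lt_of_le ha hx.1)

lemma f_mono (hF_nonneg : ∀ x : ℝ, 0 < x → 0 ≤ F x)
    (hF_mono : AntitoneOn F (Set.Ioc (0:ℝ) 2))
    (hf : ∀ w : ℝ, f w = ∫ v in w..2, F v) {a b : ℝ}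
    (ha : 0 < a) (hab : a ≤ b) (hb : b ≤ 2) : f b ≤ f a := by
  have h := f_sub hF_mono hf ha hab hb
  have h2 : 0 ≤ ∫ u in a..b, F u :=
    intervalIntegral.integral_nonneg hab (fun x hx => hF_nonneg x (lt_of_lt_of_le ha hx.1))
  linarith

lemma f_cont (hF_mono : AntitoneOn F (Set.Ioc (0:ℝ) 2))
    (hf : ∀ w : ℝ, f w = ∫ v in w..2, F v) {c : ℝ} (hc : 0 < c) (hc2 : c ≤ 2) :
    ContinuousOn f (Set.Icc c 2) := by
  have hi : IntegrableOn F (Set.uIcc c 2) volume := by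
    rw [Set.uIcc_of_le hc2]
    rw [← intervalIntegrable_iff_integrableOn_Icc_of_le hc2]
    exact F_int hF_mono hc hc2 le_rfl
  have hp : ContinuousOn (fun x => ∫ t in c..x, F t) (Set.Icc c 2) := by
    have := intervalIntegral.continuousOn_primitive_interval hi
    rwa [Set.uIcc_of_le hc2] at this
  apply (continuousOn_const.sub hp).congr
  intro u hu
  have h := f_sub hF_mono hf hc hu.1 hu.2
  show f u = f c - ∫ t in c..u, F t
  linarith

end Helpers

lemma mid_bound {F f : ℝ → ℝ} (hF_nonneg : ∀ x : ℝ, 0 < x → 0 ≤ F x)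
    (hF_mono : AntitoneOn F (Set.Ioc (0:ℝ) 2))
    (hf : ∀ w : ℝ, f w = ∫ v in w..2, F v)
    {a b w : ℝ} (hw0 : 0 < w) (ha : 0 < a) (hab : a ≤ b) (hbw : b + w ≤ 2) (j : ℕ)
    (hint : IntegrableOn (fun u => F (u + w) * f u ^ j) (Set.Ioc a b) volume) :
    ∫ u in a..b, F (u + w) * f u ^ j ≤ (f a ^ (j+1) - f b ^ (j+1)) / ((j:ℝ)+1) := by
  have hb2 : b < 2 := by linarith
  set G : ℝ → ℝ := fun u => sSup ((fun x => F (min x 2)) '' Set.Ioi u) with hG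
  -- basic facts about G
  have hboundF : ∀ u : ℝ, 0 < u → u < 2 → ∀ y ∈ (fun x => F (min x 2)) '' Set.Ioi u, y ≤ F u := by
    rintro u hu0 hu2 y ⟨x, hx, rfl⟩
    exact hF_mono ⟨hu0, hu2.le⟩ ⟨lt_min (lt_trans hu0 hx) (by norm_num), min_le_right _ _⟩
      (le_min (le_of_lt hx) hu2.le)
  have hbdd : ∀ u : ℝ, 0 < u → u < 2 → BddAbove ((fun x => F (min x 2)) '' Set.Ioi u) :=
    fun u hu0 hu2 => ⟨F u, fun y hy => hboundF u hu0 hu2 y hy⟩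
  have hne : ∀ u : ℝ, ((fun x => F (min x 2)) '' Set.Ioi u).Nonempty :=
    fun u => ⟨F (min (u+1) 2), ⟨u+1, by simp, rfl⟩⟩
  have hFleG : ∀ u x : ℝ, 0 < u → u < 2 → u < x → x ≤ 2 → F x ≤ G u := by
    intro u x hu0 hu2 hux hx2
    have : F x = F (min x 2) := by rw [min_eq_left hx2]
    rw [this]
    exact le_csSup (hbdd u hu0 hu2) ⟨x, hux, rfl⟩
  have hGnn : ∀ u : ℝ, 0 < u → u < 2 → 0 ≤ G u := by
    intro u hu0 hu2
    exact le_trans (hF_nonneg 2 (by norm_num)) (hFleG u 2 hu0 hu2 hu2 le_rfl)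
  have hGanti : ∀ u v : ℝ, 0 < u → u ≤ v → v < 2 → G v ≤ G u := by
    intro u v hu0 huv hv2
    exact csSup_le_csSup (hbdd u hu0 (lt_of_le_of_lt huv hv2)) (hne v)
      (Set.image_mono (Set.Ioi_subset_Ioi huv))
  -- right derivative of f
  have hfderiv : ∀ u : ℝ, 0 < u → u < 2 → HasDerivWithinAt f (-(G u)) (Set.Ioi u) u := by
    intro u hu0 hu2
    rw [hasDerivWithinAt_iff_tendsto_slope]
    have hdiff : Set.Ioi u \ {u} = Set.Ioi u := Set.diff_singleton_eq_self (by simp)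
    rw [hdiff]
    have hIoo : Set.Ioo u 2 ∈ nhdsWithin u (Set.Ioi u) :=
      Ioo_mem_nhdsGT_of_mem ⟨le_refl u, hu2⟩
    have hbnds : ∀ x ∈ Set.Ioo u 2, -(G u) ≤ slope f u x ∧ slope f u x ≤ -(F x) := by
      intro x hx
      have hfs := f_sub hF_mono hf hu0 hx.1.le hx.2.le
      have hxu : 0 < x - u := by linarith [hx.1]
      have hIeq : (∫ t in u..x, F t) = ∫ t in Set.Ioc u x, F t :=
        intervalIntegral.integral_of_le hx.1.le
      have hFon : IntegrableOn F (Set.Ioc u x) volume := (F_int hF_mono hu0 hx.1.le hx.2.le).1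
      have hI2 : (∫ t in u..x, F t) ≤ (x - u) * G u := by
        rw [hIeq]
        have hle : ∫ t in Set.Ioc u x, F t ≤ ∫ _t in Set.Ioc u x, G u :=
          setIntegral_mono_on hFon (integrableOn_const measure_Ioc_lt_top.ne)
            measurableSet_Ioc
            (fun s hs => hFleG u s hu0 hu2 hs.1 (le_trans hs.2 hx.2.le))
        rw [setIntegral_const, Real.volume_real_Ioc, max_eq_left hxu.le,
          smul_eq_mul] at hle
        exact hle
      have hI1 : (x - u) * F x ≤ ∫ t in u..x, F t := by
        rw [hIeq]
        have hle : ∫ _t in Set.Ioc u x, F x ≤ ∫ t in Set.Ioc u x, F t :=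
          setIntegral_mono_on (integrableOn_const measure_Ioc_lt_top.ne) hFon
            measurableSet_Ioc
            (fun s hs => hF_mono ⟨lt_trans hu0 hs.1, le_trans hs.2 hx.2.le⟩
              ⟨lt_trans hu0 hx.1, hx.2.le⟩ hs.2)
        rw [setIntegral_const, Real.volume_real_Ioc, max_eq_left hxu.le,
          smul_eq_mul] at hle
        exact hle
      have hslope : slope f u x = (f x - f u) / (x - u) := slope_def_field f u x
      constructor
      · rw [hslope, le_div_iff₀ hxu]
        nlinarith
      · rw [hslope, div_le_iff₀ hxu]
        nlinarith
    have htendFc : Filter.Tendsto (fun x => F (min x 2)) (nhdsWithin u (Set.Ioi u)) (nhds (G u)) := by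
      apply AntitoneOn.tendsto_nhdsGT _ (hbdd u hu0 hu2)
      intro x hx y hy hxy
      apply hF_mono ⟨lt_min (lt_trans hu0 hx) (by norm_num), min_le_right _ _⟩
        ⟨lt_min (lt_trans hu0 hy) (by norm_num), min_le_right _ _⟩
        (min_le_min hxy le_rfl)
    have htendF : Filter.Tendsto (fun x => -(F x)) (nhdsWithin u (Set.Ioi u)) (nhds (-(G u))) := by
      apply Filter.Tendsto.neg
      apply htendFc.congr'
      apply Filter.eventuallyEq_of_mem hIoo
      intro x hx
      simp only [min_eq_left hx.2.le]
    apply tendsto_of_tendsto_of_tendsto_of_le_of_le' tendsto_const_nhds htendF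
    · exact Filter.eventually_of_mem hIoo (fun x hx => (hbnds x hx).1)
    · exact Filter.eventually_of_mem hIoo (fun x hx => (hbnds x hx).2)
  -- FTC for -(f^(j+1))/(j+1)
  have hphicont : ContinuousOn (fun x => -(f x ^ (j+1)) / ((j:ℝ)+1)) (Set.Icc a b) := by
    apply ContinuousOn.div_const
    apply ContinuousOn.neg
    apply ContinuousOn.pow
    exact (f_cont hF_mono hf ha (by linarith)).mono (Set.Icc_subset_Icc le_rfl hb2.le)
  have hphideriv : ∀ u ∈ Set.Ioo a b,
      HasDerivWithinAt (fun x => -(f x ^ (j+1)) / ((j:ℝ)+1)) (G u * f u ^ j) (Set.Ioi u) u := by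
    intro u hu
    have hu0 : 0 < u := lt_trans ha hu.1
    have hu2 : u < 2 := lt_trans hu.2 hb2
    have h1 := (hfderiv u hu0 hu2).pow (j+1)
    have h2 := (h1.div_const ((j:ℝ)+1)).neg
    have hje : ((j:ℝ)+1) ≠ 0 := by positivity
    refine (h2.congr (fun x _ => ?_) ?_).congr_deriv ?_
    · simp only [Pi.neg_apply, Pi.pow_apply]
      ring
    · simp only [Pi.neg_apply, Pi.pow_apply]
      ring
    · simp only [Nat.add_sub_cancel]
      push_cast
      field_simp
  have hGint : IntervalIntegrable (fun u => G u * f u ^ j) volume a b := by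
    apply IntervalIntegrable.mul_continuousOn
    · apply AntitoneOn.intervalIntegrable
      rw [Set.uIcc_of_le hab]
      intro x hx y hy hxy
      exact hGanti x y (lt_of_lt_of_le ha hx.1) hxy (lt_of_le_of_lt hy.2 hb2)
    · rw [Set.uIcc_of_le hab]
      exact ((f_cont hF_mono hf ha (by linarith)).mono (Set.Icc_subset_Icc le_rfl hb2.le)).pow j
  have hmid_eq : ∫ u in a..b, G u * f u ^ j = (f a ^ (j+1) - f b ^ (j+1)) / ((j:ℝ)+1) := by
    rw [intervalIntegral.integral_eq_sub_of_hasDeriv_right_of_le hab hphicont hphideriv hGint]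
    ring
  rw [← hmid_eq, intervalIntegral.integral_of_le hab, intervalIntegral.integral_of_le hab]
  apply setIntegral_mono_on hint (hGint.1) measurableSet_Ioc
  intro u hu
  have hu0 : 0 < u := lt_trans ha hu.1
  have hu2 : u < 2 := by linarith [hu.2]
  apply mul_le_mul_of_nonneg_right
  · exact hFleG u (u+w) hu0 hu2 (by linarith) (by linarith [hu.2])
  · exact pow_nonneg (f_nonneg hF_nonneg hf hu0 hu2.le) j

lemma f_log {F f : ℝ → ℝ} (hF_mono : AntitoneOn F (Set.Ioc (0:ℝ) 2))
    {L : ℝ} (hL : 0 < L) (hF_bound : ∀ x : ℝ, 0 < x → F x ≤ 2/(x*L))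
    (hf : ∀ w : ℝ, f w = ∫ v in w..2, F v) {u c : ℝ}
    (hu : 0 < u) (huc : u ≤ c) (hc2 : c ≤ 2) :
    f u ≤ f c + (2/L) * (Real.log c - Real.log u) := by
  have hsub := f_sub hF_mono hf hu huc hc2
  have hcomp : (∫ v in u..c, F v) ≤ ∫ v in u..c, (2/L) * (1/v) := by
    apply intervalIntegral.integral_mono_on huc (F_int hF_mono hu huc hc2)
    · apply ContinuousOn.intervalIntegrable
      apply ContinuousOn.mul continuousOn_const
      apply ContinuousOn.div continuousOn_const continuousOn_id
      intro x hx
      rw [Set.uIcc_of_le huc] at hx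
      exact ne_of_gt (lt_of_lt_of_le hu hx.1)
    · intro x hx
      have hx0 : 0 < x := lt_of_lt_of_le hu hx.1
      calc F x ≤ 2/(x*L) := hF_bound x hx0
        _ = (2/L) * (1/x) := by
            simp only [division_def, mul_inv_rev]; ring
  have hlog : (∫ v in u..c, (2/L) * (1/v)) = (2/L) * (Real.log c - Real.log u) := by
    rw [intervalIntegral.integral_const_mul,
      integral_one_div (by
        rw [Set.uIcc_of_le huc]
        intro hmem
        exact absurd hmem.1 (not_le.mpr hu)),
      Real.log_div (ne_of_gt (lt_of_lt_of_le hu huc)) (ne_of_gt hu)]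
  linarith

lemma head_bound {F f : ℝ → ℝ} (hF_nonneg : ∀ x : ℝ, 0 < x → 0 ≤ F x)
    (hF_mono : AntitoneOn F (Set.Ioc (0:ℝ) 2))
    {L : ℝ} (hL : 0 < L) (hF_bound : ∀ x : ℝ, 0 < x → F x ≤ 2/(x*L))
    (hf : ∀ w : ℝ, f w = ∫ v in w..2, F v) {w : ℝ} (hw0 : 0 < w) (hw1 : w < 1) (j : ℕ)
    (hint : IntegrableOn (fun u => F (u + w) * f u ^ j) (Set.Ioc 0 (2*w)) volume) :
    (∫ u in (0:ℝ)..(2*w), F (u + w) * f u ^ j) ≤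
      ∑ k ∈ Finset.range (j+1),
        (j.factorial / k.factorial : ℝ) * (2/L)^(j-k) * (f (2*w))^k *
          (if k = j then 3/L else 4/L) := by
  have h2w0 : 0 < 2*w := by linarith
  have h2w2 : 2*w ≤ 2 := by linarith
  set a := f (2*w) with hadef
  have ha : 0 ≤ a := f_nonneg hF_nonneg hf h2w0 h2w2
  set B := ∑ k ∈ Finset.range (j+1),
    (j.factorial / k.factorial : ℝ) * (2/L)^(j-k) * a^k * (if k = j then 3/L else 4/L) with hB
  -- step: uniform bound on truncated integrals
  have hstep : ∀ ε : ℝ, 0 < ε → ε ≤ 2*w →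
      (∫ u in Set.Ioc ε (2*w), F (u + w) * f u ^ j) ≤ B := by
    intro ε hε hε2
    set P : ℝ → ℝ :=
      fun u => (2/((u+w)*L)) * (a + (2/L) * (Real.log (2*w) - Real.log u))^j with hP
    have hPcont : ContinuousOn P (Set.Icc ε (2*w)) := by
      apply ContinuousOn.mul
      · apply ContinuousOn.div continuousOn_const
        · exact (continuousOn_id.add continuousOn_const).mul continuousOn_const
        · intro x hx
          have : 0 < x + w := by nlinarith [hx.1, hε, hw0]
          positivity
      · apply ContinuousOn.pow
        apply ContinuousOn.add continuousOn_const
        apply ContinuousOn.mul continuousOn_const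
        apply ContinuousOn.sub continuousOn_const
        apply Real.continuousOn_log.mono
        intro x hx
        exact Set.mem_compl_singleton_iff.mpr (ne_of_gt (lt_of_lt_of_le hε hx.1))
    have hptw : ∀ u ∈ Set.Ioc ε (2*w), F (u + w) * f u ^ j ≤ P u := by
      intro u hu
      have hu0 : 0 < u := lt_trans hε hu.1
      have huw : 0 < u + w := by linarith
      have hFb : F (u+w) ≤ 2/((u+w)*L) := hF_bound _ huw
      have hfnn : 0 ≤ f u := f_nonneg hF_nonneg hf hu0 (le_trans hu.2 h2w2)
      have hfb : f u ≤ a + (2/L) * (Real.log (2*w) - Real.log u) :=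
        f_log hF_mono hL hF_bound hf hu0 hu.2 h2w2
      exact mul_le_mul hFb (pow_le_pow_left₀ hfnn hfb j) (pow_nonneg hfnn j) (by positivity)
    have hg_int : IntegrableOn (fun u => F (u + w) * f u ^ j) (Set.Ioc ε (2*w)) volume :=
      hint.mono_set (Set.Ioc_subset_Ioc hε.le le_rfl)
    have hP_int : IntegrableOn P (Set.Ioc ε (2*w)) volume :=
      (hPcont.integrableOn_Icc).mono_set Set.Ioc_subset_Icc_self
    have step1 : (∫ u in Set.Ioc ε (2*w), F (u + w) * f u ^ j) ≤ ∫ u in Set.Ioc ε (2*w), P u :=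
      setIntegral_mono_on hg_int hP_int measurableSet_Ioc hptw
    -- expand P as a sum
    set Q : ℕ → ℝ → ℝ := fun k u => (2/((u+w)*L)) *
      (a^k * ((2/L) * (Real.log (2*w) - Real.log u))^(j-k) * (j.choose k : ℝ)) with hQ
    have hPeq : ∀ u : ℝ, P u = ∑ k ∈ Finset.range (j+1), Q k u := by
      intro u
      rw [hP]
      simp only
      rw [add_pow, Finset.mul_sum]
    have hQcont : ∀ k, ContinuousOn (Q k) (Set.Icc ε (2*w)) := by
      intro k
      apply ContinuousOn.mul
      · apply ContinuousOn.div continuousOn_const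
        · exact (continuousOn_id.add continuousOn_const).mul continuousOn_const
        · intro x hx
          have hx1 := hx.1
          have : 0 < x + w := by nlinarith [hε]
          positivity
      · apply ContinuousOn.mul
        apply ContinuousOn.mul continuousOn_const
        · apply ContinuousOn.pow
          apply ContinuousOn.mul continuousOn_const
          apply ContinuousOn.sub continuousOn_const
          apply Real.continuousOn_log.mono
          intro x hx
          exact Set.mem_compl_singleton_iff.mpr (ne_of_gt (lt_of_lt_of_le hε hx.1))
        · exact continuousOn_const
    have step2 : (∫ u in ε..(2*w), P u) = ∑ k ∈ Finset.range (j+1), ∫ u in ε..(2*w), Q k u := by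
      rw [intervalIntegral.integral_congr (g := fun u => ∑ k ∈ Finset.range (j+1), Q k u)
        (fun u _ => hPeq u)]
      apply intervalIntegral.integral_finset_sum
      intro k _
      exact ((hQcont k).mono (by rw [Set.uIcc_of_le hε2])).intervalIntegrable
    -- bound each term
    have hterm : ∀ k ∈ Finset.range (j+1), (∫ u in ε..(2*w), Q k u) ≤
        (j.factorial / k.factorial : ℝ) * (2/L)^(j-k) * a^k * (if k = j then 3/L else 4/L) := by
      intro k hk
      rw [Finset.mem_range] at hk
      by_cases hkj : k = j
      · subst hkj
        rw [if_pos rfl]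
        have hQj : ∀ u : ℝ, Q k u = (a^k * (2/L)) * (1/(u+w)) := by
          intro u
          rw [hQ]
          simp only [Nat.sub_self, pow_zero, Nat.choose_self, Nat.cast_one]
          simp only [division_def, mul_inv_rev]
          ring
        rw [intervalIntegral.integral_congr (g := fun u => (a^k * (2/L)) * (1/(u+w)))
          (fun u _ => hQj u)]
        rw [intervalIntegral.integral_const_mul]
        have hshift : (∫ u in ε..(2*w), 1/(u+w)) = ∫ t in (ε+w)..(2*w+w), 1/t :=
          intervalIntegral.integral_comp_add_right (fun t => 1/t) w
        have hlogint : (∫ u in ε..(2*w), 1/(u+w)) = Real.log ((2*w+w)/(ε+w)) := by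
          rw [hshift, integral_one_div (by
            rw [Set.uIcc_of_le (by linarith : ε + w ≤ 2*w + w)]
            intro hmem
            have := hmem.1
            linarith)]
        have hlog3 : Real.log ((2*w+w)/(ε+w)) ≤ 3/2 := by
          have harg : (2*w+w)/(ε+w) ≤ 3 := by
            rw [div_le_iff₀ (by linarith)]
            linarith
          have harg0 : 0 < (2*w+w)/(ε+w) := by positivity
          have h1 : Real.log ((2*w+w)/(ε+w)) ≤ Real.log 3 := Real.log_le_log harg0 harg
          have h2 : Real.log 3 ≤ 3/2 := by
            have hsq : Real.log 3 = 2 * Real.log (Real.sqrt 3) := by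
              rw [Real.log_sqrt (by norm_num)]; ring
            have hs : Real.sqrt 3 ≤ 7/4 := by
              rw [show (7:ℝ)/4 = Real.sqrt ((7/4)^2) from (Real.sqrt_sq (by norm_num)).symm]
              apply Real.sqrt_le_sqrt
              norm_num
            have hlt : Real.log (Real.sqrt 3) ≤ Real.sqrt 3 - 1 :=
              Real.log_le_sub_one_of_pos (by positivity)
            nlinarith [Real.sqrt_nonneg 3]
          linarith
        calc a^k * (2/L) * (∫ u in ε..(2*w), 1/(u+w)) ≤ a^k * (2/L) * (3/2) := by
              rw [hlogint]
              exact mul_le_mul_of_nonneg_left hlog3 (by positivity)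
          _ = (k.factorial / k.factorial : ℝ) * (2/L)^(k-k) * a^k * (3/L) := by
              rw [Nat.sub_self, pow_zero, div_self (show ((k.factorial:ℝ)) ≠ 0 by positivity)]
              field_simp
      · have hkj' : k < j := lt_of_le_of_ne (Nat.lt_succ_iff.mp hk) hkj
        rw [if_neg hkj]
        have hm1 : 1 ≤ j - k := by omega
        set c : ℝ := (j.factorial / k.factorial : ℝ) * (2/L)^(j-k) * a^k * (4/L) / ((2*w) * (j-k).factorial) with hc
        -- pointwise bound for Q k
        have hQb : ∀ u ∈ Set.Icc ε (2*w), Q k u ≤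
            ((2/(w*L)) * (a^k * (2/L)^(j-k) * (j.choose k : ℝ))) *
              (Real.log (2*w) - Real.log u)^(j-k) := by
          intro u hu
          have hu0 : 0 < u := lt_of_lt_of_le hε hu.1
          have hl : 0 ≤ Real.log (2*w) - Real.log u := by
            simp only [sub_nonneg]
            exact Real.log_le_log hu0 hu.2
          rw [hQ]
          simp only
          rw [mul_pow]
          have h1 : 2/((u+w)*L) ≤ 2/(w*L) := by
            apply div_le_div_of_nonneg_left (by norm_num) (by positivity)
            nlinarith
          calc 2/((u+w)*L) * (a^k * ((2/L)^(j-k) * (Real.log (2*w) - Real.log u)^(j-k)) * (j.choose k : ℝ))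
              ≤ 2/(w*L) * (a^k * ((2/L)^(j-k) * (Real.log (2*w) - Real.log u)^(j-k)) * (j.choose k : ℝ)) := by
                apply mul_le_mul_of_nonneg_right h1
                positivity
            _ = ((2/(w*L)) * (a^k * (2/L)^(j-k) * (j.choose k : ℝ))) *
                (Real.log (2*w) - Real.log u)^(j-k) := by ring
        have hmono : (∫ u in ε..(2*w), Q k u) ≤
            ∫ u in ε..(2*w), ((2/(w*L)) * (a^k * (2/L)^(j-k) * (j.choose k : ℝ))) *
              (Real.log (2*w) - Real.log u)^(j-k) := by
          apply intervalIntegral.integral_mono_on hε2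
          · exact ((hQcont k).mono (by rw [Set.uIcc_of_le hε2])).intervalIntegrable
          · apply ContinuousOn.intervalIntegrable
            apply ContinuousOn.mul continuousOn_const
            apply ContinuousOn.pow
            apply ContinuousOn.sub continuousOn_const
            apply Real.continuousOn_log.mono
            intro x hx
            rw [Set.uIcc_of_le hε2] at hx
            exact Set.mem_compl_singleton_iff.mpr (ne_of_gt (lt_of_lt_of_le hε hx.1))
          · exact hQb
        rw [intervalIntegral.integral_const_mul] at hmono
        have hlogb := log_pow_integral_bound (2*w) ε hε hε2 (j-k)
        have hcoef : (0:ℝ) ≤ (2/(w*L)) * (a^k * (2/L)^(j-k) * (j.choose k : ℝ)) := by positivity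
        have htot : (∫ u in ε..(2*w), Q k u) ≤
            ((2/(w*L)) * (a^k * (2/L)^(j-k) * (j.choose k : ℝ))) * (2*w * ((j-k).factorial : ℝ)) :=
          le_trans hmono (mul_le_mul_of_nonneg_left hlogb hcoef)
        apply le_trans htot
        apply le_of_eq
        have hchoose : (j.choose k : ℝ) * ((j-k).factorial : ℝ) =
            (j.factorial : ℝ) / (k.factorial : ℝ) := by
          have := Nat.choose_mul_factorial_mul_factorial (le_of_lt hkj')
          have hcast : ((j.choose k * k.factorial * (j-k).factorial : ℕ) : ℝ) = (j.factorial : ℝ) := by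
            rw [this]
          push_cast at hcast
          field_simp
          linarith [hcast]
        have h4 : 2/(w*L) * (2*w) = 4/L := by
          field_simp
          ring
        calc 2/(w*L) * (a^k * (2/L)^(j-k) * (j.choose k:ℝ)) * (2*w*((j-k).factorial:ℝ))
            = (2/(w*L) * (2*w)) * (((j.choose k:ℝ) * ((j-k).factorial:ℝ)) * ((2/L)^(j-k) * a^k)) := by
              ring
          _ = (j.factorial / k.factorial : ℝ) * (2/L)^(j-k) * a^k * (4/L) := by
              rw [h4, hchoose]
              ring
    calc (∫ u in Set.Ioc ε (2*w), F (u + w) * f u ^ j) ≤ ∫ u in Set.Ioc ε (2*w), P u := step1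
      _ = ∫ u in ε..(2*w), P u := (intervalIntegral.integral_of_le hε2).symm
      _ = ∑ k ∈ Finset.range (j+1), ∫ u in ε..(2*w), Q k u := step2
      _ ≤ B := Finset.sum_le_sum hterm
  -- pass to the limit
  have hmonoset : Monotone (fun n : ℕ => Set.Ioc (2*w/(n+2)) (2*w)) := by
    intro n n' hnn'
    apply Set.Ioc_subset_Ioc_left
    apply div_le_div_of_nonneg_left (by linarith) (by positivity)
    have : (n:ℝ) ≤ (n':ℝ) := Nat.cast_le.mpr hnn'
    linarith
  have hunion : (⋃ n : ℕ, Set.Ioc (2*w/(n+2)) (2*w)) = Set.Ioc 0 (2*w) := by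
    ext x
    simp only [Set.mem_iUnion, Set.mem_Ioc]
    constructor
    · rintro ⟨n, h1, h2⟩
      exact ⟨lt_trans (by positivity) h1, h2⟩
    · rintro ⟨hx0, hx2⟩
      obtain ⟨n, hn⟩ := exists_nat_gt (2*w/x)
      refine ⟨n, ?_, hx2⟩
      rw [div_lt_iff₀ (by positivity)]
      rw [div_lt_iff₀ hx0] at hn
      nlinarith
  have htend := MeasureTheory.tendsto_setIntegral_of_monotone
    (fun n : ℕ => measurableSet_Ioc) hmonoset (by rw [hunion]; exact hint)
  rw [hunion] at htend
  rw [intervalIntegral.integral_of_le h2w0.le]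
  exact le_of_tendsto htend (Filter.Eventually.of_forall
    (fun n => hstep (2*w/(n+2)) (by positivity) (by
      apply div_le_self h2w0.le
      exact_mod_cast by omega)))



lemma final_arith (L a w : ℝ) (hL : 0 < L) (ha : 0 ≤ a) (hw0 : 0 < w) (hw1 : w < 1) (j : ℕ) :
    (∑ k ∈ Finset.range (j+1),
        (j.factorial / k.factorial : ℝ) * (2/L)^(j-k) * a^k * (if k = j then 3/L else 4/L))
      + a^(j+1)/((j:ℝ)+1) + w * (1/L) * (2/L)^j
    ≤ ∑ l ∈ Finset.range (j+2),
        (j.factorial / (j+1-l).factorial : ℝ) * (4/L)^l * a^(j+1-l) := by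
  have hrefl : (∑ k ∈ Finset.range (j+1),
      (j.factorial / k.factorial : ℝ) * (2/L)^(j-k) * a^k * (if k = j then 3/L else 4/L))
      = ∑ i ∈ Finset.range (j+1),
        (j.factorial / (j-i).factorial : ℝ) * (2/L)^i * a^(j-i) * (if i = 0 then 3/L else 4/L) := by
    rw [← Finset.sum_range_reflect]
    apply Finset.sum_congr rfl
    intro i hi
    rw [Finset.mem_range] at hi
    have hij : i ≤ j := Nat.lt_succ_iff.mp hi
    have h1 : j + 1 - 1 - i = j - i := by omega
    rw [h1, show j - (j-i) = i from by omega]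
    congr 1
    exact if_congr (by omega) rfl rfl
  have hR : ∑ l ∈ Finset.range (j+2), (j.factorial / (j+1-l).factorial : ℝ) * (4/L)^l * a^(j+1-l)
      = (∑ i ∈ Finset.range (j+1),
          (j.factorial / (j-i).factorial : ℝ) * (4/L)^(i+1) * a^(j-i)) + a^(j+1)/(j+1) := by
    rw [Finset.sum_range_succ']
    congr 1
    · apply Finset.sum_congr rfl
      intro i _
      rw [show j + 1 - (i+1) = j - i from by omega]
    · rw [show j + 1 - 0 = j + 1 from rfl]
      rw [pow_zero, Nat.factorial_succ]
      have h1 : ((j:ℝ)+1) ≠ 0 := by positivity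
      have h2 : (j.factorial : ℝ) ≠ 0 := by positivity
      push_cast
      field_simp
  rw [hrefl, hR]
  have key : (∑ i ∈ Finset.range (j+1),
        (j.factorial / (j-i).factorial : ℝ) * (2/L)^i * a^(j-i) * (if i = 0 then 3/L else 4/L))
      + w * (1/L) * (2/L)^j
      ≤ ∑ i ∈ Finset.range (j+1), (j.factorial / (j-i).factorial : ℝ) * (4/L)^(i+1) * a^(j-i) := by
    rw [Finset.sum_range_succ, Finset.sum_range_succ
      (fun i => (j.factorial / (j-i).factorial : ℝ) * (4/L)^(i+1) * a^(j-i))]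
    have hbulk : (∑ i ∈ Finset.range j,
        (j.factorial / (j-i).factorial : ℝ) * (2/L)^i * a^(j-i) * (if i = 0 then 3/L else 4/L))
        ≤ ∑ i ∈ Finset.range j, (j.factorial / (j-i).factorial : ℝ) * (4/L)^(i+1) * a^(j-i) := by
      apply Finset.sum_le_sum
      intro i _
      have hite : (if i = 0 then (3:ℝ)/L else 4/L) ≤ 4/L := by
        split
        · exact (div_le_div_iff_of_pos_right hL).mpr (by norm_num)
        · exact le_rfl
      have hpow : ((2:ℝ)/L)^i ≤ (4/L)^i := by
        apply pow_le_pow_left₀ (by positivity)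
        exact (div_le_div_iff_of_pos_right hL).mpr (by norm_num)
      calc (j.factorial / (j-i).factorial : ℝ) * (2/L)^i * a^(j-i) * (if i = 0 then 3/L else 4/L)
          ≤ (j.factorial / (j-i).factorial : ℝ) * (4/L)^i * a^(j-i) * (4/L) := by
            apply mul_le_mul _ hite (by positivity) (by positivity)
            apply mul_le_mul _ le_rfl (by positivity) (by positivity)
            apply mul_le_mul le_rfl hpow (by positivity) (by positivity)
        _ = (j.factorial / (j-i).factorial : ℝ) * (4/L)^(i+1) * a^(j-i) := by ring
    have htop : (j.factorial / (j-j).factorial : ℝ) * (2/L)^j * a^(j-j) * (if j = 0 then 3/L else 4/L)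
        + w * (1/L) * (2/L)^j
        ≤ (j.factorial / (j-j).factorial : ℝ) * (4/L)^(j+1) * a^(j-j) := by
      have hfac1 : (1:ℝ) ≤ (j.factorial : ℝ) := by
        exact_mod_cast Nat.one_le_iff_ne_zero.mpr j.factorial_ne_zero
      have hpe : ((4:ℝ)/L)^(j+1) = (4/L) * ((2:ℝ)^j * (2/L)^j) := by
        rw [pow_succ, show ((4:ℝ)/L) = 2 * (2/L) from by ring, mul_pow]
        ring
      have hct : (0:ℝ) ≤ (1/L) * (2/L)^j := by positivity
      simp only [Nat.sub_self, pow_zero, Nat.factorial_zero, Nat.cast_one, div_one, mul_one]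
      rw [hpe]
      rcases Nat.eq_zero_or_pos j with hj | hj
      · subst hj
        simp only [if_pos rfl, pow_zero, Nat.factorial_zero, Nat.cast_one, if_true]
        have h1L : (0:ℝ) < 1/L := one_div_pos.mpr hL
        have hw' : w * (1/L) ≤ 1 * (1/L) := by nlinarith
        have e : (3:ℝ)/L + 1/L = 4/L := by ring
        linarith
      · rw [if_neg (by omega : ¬ j = 0)]
        have h2j : (2:ℝ) ≤ 2^j := by
          calc (2:ℝ) = 2^1 := (pow_one 2).symm
          _ ≤ 2^j := pow_le_pow_right₀ (by norm_num) hj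
        have hkey : (4*(j.factorial:ℝ) + w) ≤ 4*(j.factorial:ℝ)*2^j := by nlinarith
        calc (j.factorial:ℝ) * (2/L)^j * (4/L) + w * (1/L) * (2/L)^j
            = (4*(j.factorial:ℝ) + w) * ((1/L) * (2/L)^j) := by ring
          _ ≤ (4*(j.factorial:ℝ)*2^j) * ((1/L) * (2/L)^j) := mul_le_mul_of_nonneg_right hkey hct
          _ = (j.factorial:ℝ) * (4/L * ((2:ℝ)^j * (2/L)^j)) := by ring
    linarith
  linarith


lemma f_le_FF {F f : ℝ → ℝ} (hF_mono : AntitoneOn F (Set.Ioc (0:ℝ) 2))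
    (hf : ∀ w : ℝ, f w = ∫ v in w..2, F v) {c : ℝ} (hc : 0 < c) (hc2 : c ≤ 2) :
    f c ≤ (2 - c) * F c := by
  rw [hf]
  have h := intervalIntegral.integral_mono_on hc2 (F_int hF_mono hc hc2 le_rfl)
    intervalIntegrable_const
    (fun x hx => hF_mono ⟨hc, hc2⟩ ⟨lt_of_lt_of_le hc hx.1, hx.2⟩ hx.1)
  simpa [smul_eq_mul] using h

lemma tail_bound {F f : ℝ → ℝ} (hF_nonneg : ∀ x : ℝ, 0 < x → 0 ≤ F x)
    (hF_mono : AntitoneOn F (Set.Ioc (0:ℝ) 2))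
    {L : ℝ} (hL : 0 < L) (hF_bound : ∀ x : ℝ, 0 < x → F x ≤ 2/(x*L))
    (hf : ∀ w : ℝ, f w = ∫ v in w..2, F v) {w q : ℝ} (hw0 : 0 < w) (hw1 : w < 1)
    (hq1 : 1 ≤ q) (hq2 : q < 2) (hqw : 2 - w ≤ q) (j : ℕ)
    (hint : IntegrableOn (fun u => F (u + w) * f u ^ j) (Set.Ioc q 2) volume) :
    (∫ u in q..2, F (u + w) * f u ^ j) ≤ w * (1/L) * (2/L)^j := by
  have hq0 : 0 < q := by linarith
  have hfq : f q ≤ 2/L := by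
    have h1 := f_le_FF hF_mono hf hq0 hq2.le
    have h2 : F q ≤ 2/(q*L) := hF_bound q hq0
    have h3 : 2/(q*L) ≤ 2/L := by
      apply div_le_div_of_nonneg_left (by norm_num) hL
      nlinarith
    have h4 : 0 ≤ F q := hF_nonneg q hq0
    nlinarith
  have hptw : ∀ u ∈ Set.Ioc q 2, F (u + w) * f u ^ j ≤ (1/L) * (2/L)^j := by
    intro u hu
    have hu0 : 0 < u := lt_trans hq0 hu.1
    have huw : 0 < u + w := by linarith
    have hFb : F (u + w) ≤ 1/L := by
      have h1 : F (u+w) ≤ 2/((u+w)*L) := hF_bound _ huw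
      have h2 : 2/((u+w)*L) ≤ 1/L := by
        rw [div_le_div_iff₀ (by positivity) hL]
        nlinarith [hu.1]
      linarith
    have hfnn : 0 ≤ f u := f_nonneg hF_nonneg hf hu0 hu.2
    have hfu : f u ≤ 2/L :=
      le_trans (f_mono hF_nonneg hF_mono hf hq0 hu.1.le hu.2) hfq
    exact mul_le_mul hFb (pow_le_pow_left₀ hfnn hfu j) (pow_nonneg hfnn j) (by positivity)
  rw [intervalIntegral.integral_of_le hq2.le]
  calc (∫ u in Set.Ioc q 2, F (u + w) * f u ^ j)
      ≤ ∫ _u in Set.Ioc q 2, (1/L) * (2/L)^j :=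
        setIntegral_mono_on hint (integrableOn_const measure_Ioc_lt_top.ne)
          measurableSet_Ioc hptw
    _ = (2 - q) * ((1/L) * (2/L)^j) := by
        rw [setIntegral_const, Real.volume_real_Ioc, max_eq_left (by linarith), smul_eq_mul]
    _ ≤ w * (1/L) * (2/L)^j := by
        have h1 : 2 - q ≤ w := by linarith
        have h2 : (0:ℝ) ≤ (1/L) * (2/L)^j := by positivity
        nlinarith

theorem key_convolution_bound (lam : ℝ) (hlam : 1 < lam) (F : ℝ → ℝ)
    (hF_nonneg : ∀ x : ℝ, 0 < x → 0 ≤ F x)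
    (hF_mono : AntitoneOn F (Set.Ioc (0:ℝ) 2))
    (hF_bound : ∀ x : ℝ, 0 < x → F x ≤ 2 / (x * Real.log lam))
    (f : ℝ → ℝ) (hf : ∀ w : ℝ, f w = ∫ v in w..2, F v)
    (j : ℕ) (w : ℝ) (hw : w ∈ Set.Ioo (0:ℝ) 1) :
    (∫ u in (0:ℝ)..2, F (u + w) * f u ^ j) ≤
      ∑ l ∈ Finset.range (j + 2),
        ((Nat.factorial j : ℝ) / (Nat.factorial (j + 1 - l) : ℝ)) *
          (4 / Real.log lam) ^ l * f (2*w) ^ (j + 1 - l) := by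
  obtain ⟨hw0, hw1⟩ := hw
  have hL : 0 < Real.log lam := Real.log_pos hlam
  have h2w0 : 0 < 2*w := by linarith
  have h2w2 : 2*w ≤ 2 := by linarith
  have ha : 0 ≤ f (2*w) := f_nonneg hF_nonneg hf h2w0 h2w2
  by_cases hint : IntervalIntegrable (fun u => F (u + w) * f u ^ j) volume 0 2
  · set q := max (2*w) (2-w) with hq
    have hq1 : (1:ℝ) ≤ q := le_trans (by linarith) (le_max_right _ _)
    have hq2 : q < 2 := max_lt (by linarith) (by linarith)
    have h2wq : 2*w ≤ q := le_max_left _ _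
    have hqw : 2 - w ≤ q := le_max_right _ _
    have hsub1 : Set.uIcc 0 (2*w) ⊆ Set.uIcc (0:ℝ) 2 := by
      rw [Set.uIcc_of_le (by linarith : (0:ℝ) ≤ 2*w), Set.uIcc_of_le (by norm_num : (0:ℝ) ≤ 2)]
      exact Set.Icc_subset_Icc le_rfl (by linarith)
    have hsub2 : Set.uIcc (2*w) q ⊆ Set.uIcc (0:ℝ) 2 := by
      rw [Set.uIcc_of_le h2wq, Set.uIcc_of_le (by norm_num : (0:ℝ) ≤ 2)]
      exact Set.Icc_subset_Icc (by linarith) hq2.le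
    have hsub3 : Set.uIcc q 2 ⊆ Set.uIcc (0:ℝ) 2 := by
      rw [Set.uIcc_of_le hq2.le, Set.uIcc_of_le (by norm_num : (0:ℝ) ≤ 2)]
      exact Set.Icc_subset_Icc (by linarith) le_rfl
    have hsub23 : Set.uIcc (2*w) 2 ⊆ Set.uIcc (0:ℝ) 2 := by
      rw [Set.uIcc_of_le h2w2, Set.uIcc_of_le (by norm_num : (0:ℝ) ≤ 2)]
      exact Set.Icc_subset_Icc (by linarith) le_rfl
    have i1 := hint.mono_set hsub1
    have i2 := hint.mono_set hsub2
    have i3 := hint.mono_set hsub3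
    have i23 := hint.mono_set hsub23
    have e1 := intervalIntegral.integral_add_adjacent_intervals i1 i23
    have e2 := intervalIntegral.integral_add_adjacent_intervals i2 i3
    -- head bound
    have hH := head_bound hF_nonneg hF_mono hL hF_bound hf hw0 hw1 j i1.1
    -- middle bound
    have hM : (∫ u in (2*w)..q, F (u + w) * f u ^ j) ≤ f (2*w)^(j+1)/((j:ℝ)+1) := by
      rcases eq_or_lt_of_le h2wq with heq | hlt
      · rw [← heq, intervalIntegral.integral_same]
        positivity
      · have hq_eq : q = 2 - w := by
          rcases max_cases (2*w) (2-w) with ⟨h1, _⟩ | ⟨h1, _⟩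
          · rw [hq, h1] at hlt
            linarith
          · rw [hq, h1]
        have hmb := mid_bound hF_nonneg hF_mono hf hw0 h2w0 (le_of_lt hlt)
          (by rw [hq_eq]; linarith) j i2.1
        apply le_trans hmb
        have hfq : (0:ℝ) ≤ f q ^ (j+1) :=
          pow_nonneg (f_nonneg hF_nonneg hf (by linarith) hq2.le) _
        exact (div_le_div_iff_of_pos_right (by positivity : (0:ℝ) < (j:ℝ)+1)).mpr (by linarith)
    -- tail bound
    have hT := tail_bound hF_nonneg hF_mono hL hF_bound hf hw0 hw1 hq1 hq2 hqw j i3.1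
    have hfinal := final_arith (Real.log lam) (f (2*w)) w hL ha hw0 hw1 j
    linarith [hH, hM, hT, hfinal, e1, e2]
  · rw [intervalIntegral.integral_undef hint]
    apply Finset.sum_nonneg
    intro l _
    have h4 : (0:ℝ) ≤ 4 / Real.log lam := by positivity
    exact mul_nonneg (mul_nonneg (by positivity) (pow_nonneg h4 l)) (pow_nonneg ha _)
end

section
/- Fix θ ∈ ℝ and λ > e^{θ-γ+1/2}, and define f_λ(u) := ∫₀^∞ (1/σ)(e^{-σu} − e^{-2σ})/(log(λ + σ/2) − (θ−γ)) dσ. Then there exists a constant C > 0 such that for all sufficiently small ε > 0 and all u ∈ (0, ε²], f_λ(u) ≤ (1 + C/log log(1/ε)) · log log(1/u). -/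
open MeasureTheory Set

/-- `f_λ(u) = ∫₀^∞ σ⁻¹ (e^{-σu} - e^{-2σ}) / (log(λ+σ/2) - (θ-γ)) dσ`. -/
noncomputable def fLam (θ lam u : ℝ) : ℝ :=
  ∫ σ in Set.Ioi (0:ℝ),
    (1/σ) * (Real.exp (-σ * u) - Real.exp (-2 * σ)) /
      (Real.log (lam + σ/2) - (θ - eulerGamma))

lemma fLam_key (θ lam : ℝ) (hlam : lam > Real.exp (θ - eulerGamma + 1/2)) :
    ∃ A u₀ : ℝ, 1 ≤ A ∧ 0 < u₀ ∧ u₀ ≤ Real.exp (-(Real.exp 1)) ∧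
      ∀ u : ℝ, 0 < u → u ≤ u₀ →
        fLam θ lam u ≤ Real.log (Real.log (1/u)) + A := by
  have hlampos : 0 < lam := lt_trans (Real.exp_pos _) hlam
  set c₀ : ℝ := eulerGamma - θ - Real.log 2 with hc₀
  set σ₁ : ℝ := max 1 (Real.exp (1 - c₀)) with hσ₁
  have hσ₁one : (1:ℝ) ≤ σ₁ := le_max_left _ _
  have hσ₁pos : (0:ℝ) < σ₁ := lt_of_lt_of_le one_pos hσ₁one
  have hlogσ₁ : 1 ≤ Real.log σ₁ + c₀ := by
    have h := Real.log_le_log (Real.exp_pos _) (le_max_right 1 (Real.exp (1 - c₀)))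
    rw [Real.log_exp] at h
    linarith
  refine ⟨4*σ₁ + |c₀| + 1, min (1/(σ₁+1)) (Real.exp (-(Real.exp 1))),
    by linarith [abs_nonneg c₀, hσ₁pos], by positivity, min_le_right _ _, ?_⟩
  intro u hu hu₀
  have hu1 : u ≤ 1/(σ₁+1) := le_trans hu₀ (min_le_left _ _)
  have hu2 : u ≤ Real.exp (-(Real.exp 1)) := le_trans hu₀ (min_le_right _ _)
  set T : ℝ := 1/u with hT
  have hTpos : 0 < T := by positivity
  have hT1 : σ₁ + 1 ≤ T := by
    have := one_div_le_one_div_of_le hu hu1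
    rwa [one_div_one_div] at this
  have hσ₁T : σ₁ ≤ T := by linarith
  have hlogT : Real.exp 1 ≤ Real.log T := by
    have h1 : Real.exp (Real.exp 1) ≤ T := by
      have := one_div_le_one_div_of_le hu hu2
      rwa [one_div, ← Real.exp_neg, neg_neg] at this
    have := Real.log_le_log (Real.exp_pos _) h1
    rwa [Real.log_exp] at this
  have hexp1 : (2:ℝ) ≤ Real.exp 1 := by
    have := Real.add_one_le_exp (1:ℝ); linarith
  have hlogT1 : 1 ≤ Real.log T := by linarith
  have hloglogT : 1 ≤ Real.log (Real.log T) := by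
    have := Real.log_le_log (Real.exp_pos 1) hlogT
    rwa [Real.log_exp] at this
  -- denominator lower bounds
  have hD1 : ∀ σ : ℝ, 0 ≤ σ → 1/2 ≤ Real.log (lam + σ/2) - (θ - eulerGamma) := by
    intro σ hσ
    have h1 : Real.exp (θ - eulerGamma + 1/2) ≤ lam + σ/2 := by linarith [hlam.le]
    have h2 : θ - eulerGamma + 1/2 ≤ Real.log (lam + σ/2) :=
      (Real.le_log_iff_exp_le (by positivity)).mpr h1
    linarith
  have hD2 : ∀ σ : ℝ, σ₁ ≤ σ → Real.log σ + c₀ ≤ Real.log (lam + σ/2) - (θ - eulerGamma) := by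
    intro σ hσ
    have hσpos : 0 < σ := lt_of_lt_of_le hσ₁pos hσ
    have h1 : Real.log (σ/2) ≤ Real.log (lam + σ/2) :=
      Real.log_le_log (by positivity) (by linarith)
    rw [Real.log_div hσpos.ne' two_ne_zero] at h1
    rw [hc₀]; linarith
  set g : ℝ → ℝ := fun σ =>
    (1/σ) * (Real.exp (-σ * u) - Real.exp (-2 * σ)) /
      (Real.log (lam + σ/2) - (θ - eulerGamma)) with hg
  have hfLam : fLam θ lam u = ∫ σ in Set.Ioi (0:ℝ), g σ := rfl
  by_cases hint : IntegrableOn g (Set.Ioi (0:ℝ)) volume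
  swap
  · rw [hfLam, integral_undef hint]
    have : (0:ℝ) ≤ |c₀| := abs_nonneg _
    linarith
  -- split the integral
  have hsub1 : Set.Ioc (0:ℝ) σ₁ ⊆ Set.Ioi 0 := Set.Ioc_subset_Ioi_self
  have hsub2 : Set.Ioi σ₁ ⊆ Set.Ioi (0:ℝ) := Set.Ioi_subset_Ioi hσ₁pos.le
  have hsub3 : Set.Ioc σ₁ T ⊆ Set.Ioi (0:ℝ) := fun x hx => lt_of_lt_of_le hσ₁pos (le_of_lt hx.1)
  have hsub4 : Set.Ioi T ⊆ Set.Ioi (0:ℝ) := Set.Ioi_subset_Ioi hTpos.le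
  have hsplit1 : ∫ σ in Set.Ioi (0:ℝ), g σ
      = (∫ σ in Set.Ioc 0 σ₁, g σ) + ∫ σ in Set.Ioi σ₁, g σ := by
    rw [← setIntegral_union Set.Ioc_disjoint_Ioi_same measurableSet_Ioi
      (hint.mono_set hsub1) (hint.mono_set hsub2), Set.Ioc_union_Ioi_eq_Ioi hσ₁pos.le]
  have hsplit2 : ∫ σ in Set.Ioi σ₁, g σ
      = (∫ σ in Set.Ioc σ₁ T, g σ) + ∫ σ in Set.Ioi T, g σ := by
    rw [← setIntegral_union Set.Ioc_disjoint_Ioi_same measurableSet_Ioi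
      (hint.mono_set hsub3) (hint.mono_set hsub4), Set.Ioc_union_Ioi_eq_Ioi hσ₁T]
  -- Piece 1
  have hI1 : (∫ σ in Set.Ioc (0:ℝ) σ₁, g σ) ≤ 4*σ₁ := by
    have hptwise : ∀ σ ∈ Set.Ioc (0:ℝ) σ₁, g σ ≤ 4 := by
      intro σ hσ
      have hσpos : 0 < σ := hσ.1
      have hE1 : Real.exp (-σ * u) ≤ 1 := Real.exp_le_one_iff.mpr (by nlinarith)
      have hE2 : 1 - 2*σ ≤ Real.exp (-2 * σ) := by
        have := Real.add_one_le_exp (-2*σ); linarith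
      have hnum : (1/σ) * (Real.exp (-σ * u) - Real.exp (-2 * σ)) ≤ 2 := by
        have h1 : Real.exp (-σ * u) - Real.exp (-2 * σ) ≤ 2*σ := by linarith
        have h2 : (1/σ) * (Real.exp (-σ * u) - Real.exp (-2 * σ)) ≤ (1/σ) * (2*σ) :=
          mul_le_mul_of_nonneg_left h1 (by positivity)
        have h3 : (1/σ) * (2*σ) = 2 := by field_simp
        linarith
      have hD := hD1 σ hσpos.le
      have := div_le_div₀ (by norm_num : (0:ℝ) ≤ 2) hnum (by norm_num : (0:ℝ) < 1/2) hD
      calc g σ ≤ 2 / (1/2) := this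
        _ = 4 := by norm_num
    calc (∫ σ in Set.Ioc (0:ℝ) σ₁, g σ) ≤ ∫ _ in Set.Ioc (0:ℝ) σ₁, (4:ℝ) :=
          setIntegral_mono_on (hint.mono_set hsub1)
            ((integrableOn_const_iff).mpr (Or.inr measure_Ioc_lt_top)) measurableSet_Ioc hptwise
      _ = (volume (Set.Ioc (0:ℝ) σ₁)).toReal • (4:ℝ) := setIntegral_const 4
      _ = 4*σ₁ := by
          rw [Real.volume_Ioc, ENNReal.toReal_ofReal (by linarith : (0:ℝ) ≤ σ₁ - 0),
            smul_eq_mul]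
          ring
  -- Piece 2
  have hI2 : (∫ σ in Set.Ioc σ₁ T, g σ) ≤ Real.log (Real.log T) + |c₀| := by
    set h : ℝ → ℝ := fun σ => 1/(σ * (Real.log σ + c₀)) with hh
    have hcont : ContinuousOn h (Set.Icc σ₁ T) := by
      apply ContinuousOn.div continuousOn_const
      · apply ContinuousOn.mul continuousOn_id
        apply ContinuousOn.add _ continuousOn_const
        exact Real.continuousOn_log.mono (fun x hx => by
          simp only [Set.mem_compl_iff, Set.mem_singleton_iff]
          exact (lt_of_lt_of_le hσ₁pos hx.1).ne')
      · intro x hx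
        have hx1 : 0 < x := lt_of_lt_of_le hσ₁pos hx.1
        have hx2 : 1 ≤ Real.log x + c₀ := by
          have := Real.log_le_log hσ₁pos hx.1; linarith
        positivity
    have hhint : IntegrableOn h (Set.Ioc σ₁ T) volume :=
      (hcont.integrableOn_Icc).mono_set Set.Ioc_subset_Icc_self
    have hptwise : ∀ σ ∈ Set.Ioc σ₁ T, g σ ≤ h σ := by
      intro σ hσ
      have hσpos : 0 < σ := lt_of_lt_of_le hσ₁pos hσ.1.le
      have hlogσ : 1 ≤ Real.log σ + c₀ := by
        have := Real.log_le_log hσ₁pos hσ.1.le; linarith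
      have hE1 : Real.exp (-σ * u) ≤ 1 := Real.exp_le_one_iff.mpr (by nlinarith)
      have hnum : (1/σ) * (Real.exp (-σ * u) - Real.exp (-2 * σ)) ≤ 1/σ := by
        have h2 : Real.exp (-σ * u) - Real.exp (-2 * σ) ≤ 1 := by
          have := Real.exp_pos (-2*σ); linarith
        have := mul_le_mul_of_nonneg_left h2 (by positivity : (0:ℝ) ≤ 1/σ)
        simpa using this
      have := div_le_div₀ (by positivity : (0:ℝ) ≤ 1/σ) hnum (by linarith : (0:ℝ) < Real.log σ + c₀)
        (hD2 σ hσ.1.le)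
      calc g σ ≤ (1/σ) / (Real.log σ + c₀) := this
        _ = h σ := by rw [hh]; rw [div_div]
    have hieq : (∫ σ in Set.Ioc σ₁ T, h σ)
        = Real.log (Real.log T + c₀) - Real.log (Real.log σ₁ + c₀) := by
      rw [← intervalIntegral.integral_of_le hσ₁T]
      have hderiv : ∀ x ∈ Set.uIcc σ₁ T,
          HasDerivAt (fun y => Real.log (Real.log y + c₀)) (h x) x := by
        intro x hx
        rw [Set.uIcc_of_le hσ₁T] at hx
        have hx1 : 0 < x := lt_of_lt_of_le hσ₁pos hx.1
        have hx2 : 1 ≤ Real.log x + c₀ := by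
          have := Real.log_le_log hσ₁pos hx.1; linarith
        have d1 : HasDerivAt (fun y => Real.log y + c₀) x⁻¹ x :=
          (Real.hasDerivAt_log hx1.ne').add_const c₀
        have d2 := d1.log (by linarith : Real.log x + c₀ ≠ 0)
        convert d2 using 1
        rw [hh]
        field_simp
      rw [intervalIntegral.integral_eq_sub_of_hasDerivAt hderiv
        (hcont.intervalIntegrable_of_Icc hσ₁T)]
    have hF1 : 0 ≤ Real.log (Real.log σ₁ + c₀) := Real.log_nonneg hlogσ₁
    have hF2 : Real.log (Real.log T + c₀) ≤ Real.log (Real.log T) + |c₀| := by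
      have habs : Real.log T + c₀ ≤ Real.log T * (1 + |c₀|) := by
        have h1 : c₀ ≤ |c₀| := le_abs_self c₀
        nlinarith [abs_nonneg c₀]
      have hpos : 0 < Real.log T + c₀ := by
        have := Real.log_le_log hσ₁pos hσ₁T; linarith
      calc Real.log (Real.log T + c₀) ≤ Real.log (Real.log T * (1 + |c₀|)) :=
            Real.log_le_log hpos habs
        _ = Real.log (Real.log T) + Real.log (1 + |c₀|) := by
            rw [Real.log_mul (by linarith) (by positivity)]
        _ ≤ Real.log (Real.log T) + |c₀| := by
            have := Real.log_le_sub_one_of_pos (by positivity : (0:ℝ) < 1 + |c₀|)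
            linarith
    calc (∫ σ in Set.Ioc σ₁ T, g σ) ≤ ∫ σ in Set.Ioc σ₁ T, h σ :=
          setIntegral_mono_on (hint.mono_set hsub3) hhint measurableSet_Ioc hptwise
      _ = Real.log (Real.log T + c₀) - Real.log (Real.log σ₁ + c₀) := hieq
      _ ≤ Real.log (Real.log T) + |c₀| := by linarith
  -- Piece 3
  have hI3 : (∫ σ in Set.Ioi T, g σ) ≤ 1 := by
    set m : ℝ → ℝ := fun σ => 2*u * Real.exp (-u * σ) with hm
    have hmint : IntegrableOn m (Set.Ioi T) volume := by
      exact (exp_neg_integrableOn_Ioi T hu).const_mul (2*u)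
    have hptwise : ∀ σ ∈ Set.Ioi T, g σ ≤ m σ := by
      intro σ hσ
      have hσT : T ≤ σ := (le_of_lt hσ)
      have hσpos : 0 < σ := lt_of_lt_of_le hTpos hσT
      have hinv : 1/σ ≤ u := by
        have := one_div_le_one_div_of_le hTpos hσT
        rwa [hT, one_div_one_div] at this
      have hnum : (1/σ) * (Real.exp (-σ * u) - Real.exp (-2 * σ)) ≤ u * Real.exp (-u * σ) := by
        have h1 : Real.exp (-σ * u) - Real.exp (-2 * σ) ≤ Real.exp (-σ * u) := by
          have := Real.exp_pos (-2*σ); linarith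
        have h2 : (1/σ) * (Real.exp (-σ * u) - Real.exp (-2 * σ))
            ≤ (1/σ) * Real.exp (-σ * u) :=
          mul_le_mul_of_nonneg_left h1 (by positivity)
        have h3 : (1/σ) * Real.exp (-σ * u) ≤ u * Real.exp (-σ * u) :=
          mul_le_mul_of_nonneg_right hinv (Real.exp_pos _).le
        rw [show -u * σ = -σ * u by ring]
        linarith
      have := div_le_div₀ (by positivity : (0:ℝ) ≤ u * Real.exp (-u * σ)) hnum
        (by norm_num : (0:ℝ) < 1/2) (hD1 σ hσpos.le)
      calc g σ ≤ (u * Real.exp (-u * σ)) / (1/2) := this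
        _ = m σ := by rw [hm]; ring
    have hieq : (∫ σ in Set.Ioi T, m σ) = 2 * Real.exp (-1) := by
      have hderiv : ∀ x ∈ Set.Ici T, HasDerivAt (fun y => -2 * Real.exp (-u * y)) (m x) x := by
        intro x _
        have d1 : HasDerivAt (fun y : ℝ => -u * y) (-u * 1) x := (hasDerivAt_id x).const_mul (-u)
        have d2 := (d1.exp).const_mul (-2)
        refine d2.congr_deriv ?_
        rw [hm]; ring
      have htend : Filter.Tendsto (fun y => -2 * Real.exp (-u * y)) Filter.atTop (nhds 0) := by
        have h1 : Filter.Tendsto (fun y : ℝ => Real.exp (-u * y)) Filter.atTop (nhds 0) :=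
          Real.tendsto_exp_atBot.comp
            (Filter.tendsto_id.const_mul_atTop_of_neg (neg_neg_iff_pos.2 hu))
        have := h1.const_mul (-2)
        simpa using this
      rw [integral_Ioi_of_hasDerivAt_of_tendsto' hderiv hmint htend]
      have : -u * T = -1 := by rw [hT]; field_simp
      rw [this]; ring
    have hexpneg : Real.exp (-1 : ℝ) ≤ 1/2 := by
      rw [Real.exp_neg]
      rw [inv_le_comm₀ (Real.exp_pos 1) (by norm_num)]
      norm_num
      linarith
    calc (∫ σ in Set.Ioi T, g σ) ≤ ∫ σ in Set.Ioi T, m σ :=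
          setIntegral_mono_on (hint.mono_set hsub4) hmint measurableSet_Ioi hptwise
      _ = 2 * Real.exp (-1) := hieq
      _ ≤ 1 := by linarith
  rw [hfLam, hsplit1, hsplit2]
  have : Real.log (Real.log (1/u)) = Real.log (Real.log T) := rfl
  rw [this]
  linarith

theorem fLam_asymptotic (θ lam : ℝ) (hlam : lam > Real.exp (θ - eulerGamma + 1/2)) :
    ∃ C : ℝ, 0 < C ∧ ∃ ε₀ : ℝ, 0 < ε₀ ∧ ∀ ε : ℝ, 0 < ε → ε < ε₀ →
      ∀ u : ℝ, 0 < u → u ≤ ε^2 →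
        fLam θ lam u ≤ (1 + C / Real.log (Real.log (1/ε))) * Real.log (Real.log (1/u)) := by
  obtain ⟨A, u₀, hA, hu₀pos, hu₀le, hkey⟩ := fLam_key θ lam hlam
  refine ⟨A, by linarith, min (Real.sqrt u₀) (Real.exp (-(Real.exp 1))), by positivity, ?_⟩
  intro ε hε hεlt u hu huε
  have hε1 : ε < Real.sqrt u₀ := lt_of_lt_of_le hεlt (min_le_left _ _)
  have hε2 : ε < Real.exp (-(Real.exp 1)) := lt_of_lt_of_le hεlt (min_le_right _ _)
  have hεone : ε < 1 := by
    have : Real.exp (-(Real.exp 1)) < 1 :=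
      Real.exp_lt_one_iff.mpr (neg_lt_zero.mpr (Real.exp_pos 1))
    linarith
  have huu₀ : u ≤ u₀ := by
    have h1 : ε^2 ≤ (Real.sqrt u₀)^2 := by nlinarith [Real.sqrt_nonneg u₀]
    rw [Real.sq_sqrt hu₀pos.le] at h1
    linarith
  have hmain := hkey u hu huu₀
  -- log log (1/ε) ≥ 1 etc.
  have hexp1 : (2:ℝ) ≤ Real.exp 1 := by
    have := Real.add_one_le_exp (1:ℝ); linarith
  have hlogε : Real.exp 1 ≤ Real.log (1/ε) := by
    have h1 : Real.exp (Real.exp 1) ≤ 1/ε := by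
      have := one_div_le_one_div_of_le hε hε2.le
      rwa [one_div, ← Real.exp_neg, neg_neg] at this
    have := Real.log_le_log (Real.exp_pos _) h1
    rwa [Real.log_exp] at this
  have hLε : 1 ≤ Real.log (Real.log (1/ε)) := by
    have := Real.log_le_log (Real.exp_pos 1) hlogε
    rwa [Real.log_exp] at this
  have hmono : Real.log (Real.log (1/ε)) ≤ Real.log (Real.log (1/u)) := by
    have h1 : 1/ε ≤ 1/u := by
      apply one_div_le_one_div_of_le hu
      nlinarith
    have h2 : Real.log (1/ε) ≤ Real.log (1/u) := Real.log_le_log (by positivity) h1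
    exact Real.log_le_log (by linarith [Real.exp_pos 1]) h2
  set L := Real.log (Real.log (1/ε))
  set M := Real.log (Real.log (1/u))
  have hLpos : 0 < L := by linarith
  have : A ≤ A * (M / L) := by
    have h1 : 1 ≤ M / L := (one_le_div hLpos).mpr hmono
    nlinarith
  have hexpand : (1 + A / L) * M = M + A * (M / L) := by
    field_simp
  rw [hexpand]
  linarith
end
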